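/- arXiv:1010.1600 — 6 statements merged into one kernel-verified Lean document; each statement's English description precedes it below -/
import Mathlib

section
/- Let X be a normal topometric space, let S ⊆ ℝ be finite, and let {(F_α, G_α) : α ∈ S} be a finite partial c-Lipschitz approximation (i.e., F_α, G_α are closed and d(F_α, G_β)·c > β − α for α < β in S). Then for any β ∈ S there exist closed sets F'_β ⊇ F_β and G'_β ⊇ G_β with F'_β ∪ G'_β = X such that replacing (F_β, G_β) by (F'_β, G'_β) again yields a partial c-Lipschitz approximation. -/
open scoped ENNReal NNReal
open Set

structure TopometricOn (X : Type*) [TopologicalSpace X] where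
  d : X → X → ℝ≥0∞
  d_self : ∀ x, d x x = 0
  eq_of_d_eq_zero : ∀ x y, d x y = 0 → x = y
  d_symm : ∀ x y, d x y = d y x
  d_triangle : ∀ x y z, d x z ≤ d x y + d y z
  lsc : LowerSemicontinuous fun p : X × X => d p.1 p.2
  refines : ∀ U : Set X, IsOpen U → ∀ x ∈ U, ∃ ε > (0 : ℝ≥0∞), ∀ y, d x y < ε → y ∈ U

namespace TopometricOn

variable {X : Type*} [TopologicalSpace X]

noncomputable def setD (T : TopometricOn X) (F G : Set X) : ℝ≥0∞ :=
  ⨅ x ∈ F, ⨅ y ∈ G, T.d x y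

noncomputable def ptD (T : TopometricOn X) (x : X) (F : Set X) : ℝ≥0∞ :=
  ⨅ y ∈ F, T.d x y

def IsNormal (T : TopometricOn X) : Prop :=
  (∀ F G : Set X, IsClosed F → IsClosed G → 0 < T.setD F G →
      ∃ U V : Set X, IsOpen U ∧ IsOpen V ∧ F ⊆ U ∧ G ⊆ V ∧ Disjoint U V) ∧
  (∀ F : Set X, IsClosed F → ∀ r : ℝ≥0∞, 0 < r → IsClosed {x | T.ptD x F ≤ r})

end TopometricOn

namespace TopometricOn

variable {X : Type*} [TopologicalSpace X] (T : TopometricOn X)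

theorem setD_le_d' {F G : Set X} {f g : X} (hf : f ∈ F) (hg : g ∈ G) :
    T.setD F G ≤ T.d f g :=
  le_trans (iInf₂_le f hf) (iInf₂_le g hg)

theorem le_setD' {F G : Set X} {r : ℝ≥0∞} (h : ∀ f ∈ F, ∀ g ∈ G, r ≤ T.d f g) :
    r ≤ T.setD F G :=
  le_iInf₂ fun f hf => le_iInf₂ fun g hg => h f hf g hg

theorem ptD_le_d' {G : Set X} {g : X} (x : X) (hg : g ∈ G) : T.ptD x G ≤ T.d x g :=
  iInf₂_le g hg

theorem exists_of_ptD_lt {G : Set X} {x : X} {a : ℝ≥0∞} (h : T.ptD x G < a) :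
    ∃ g ∈ G, T.d x g < a := by
  rw [ptD, iInf_lt_iff] at h
  obtain ⟨g, hg⟩ := h
  rw [iInf_lt_iff] at hg
  obtain ⟨hgG, hlt⟩ := hg
  exact ⟨g, hgG, hlt⟩

end TopometricOn


/-- extending one pair of a finite partial `c`-Lipschitz approximation
to a total pair, in a normal topometric space. -/
theorem partial_approximation_extension {X : Type*} [TopologicalSpace X]
    (T : TopometricOn X) (hT : T.IsNormal) (S : Finset ℝ) (F G : ℝ → Set X) (c : ℝ≥0)
    (hF : ∀ α ∈ S, IsClosed (F α)) (hG : ∀ α ∈ S, IsClosed (G α))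
    (happ : ∀ α ∈ S, ∀ β ∈ S, α < β →
      ENNReal.ofReal (β - α) < T.setD (F α) (G β) * (c : ℝ≥0∞))
    (β : ℝ) (hβ : β ∈ S) :
    ∃ F' G' : Set X, IsClosed F' ∧ IsClosed G' ∧ F β ⊆ F' ∧ G β ⊆ G' ∧
      F' ∪ G' = Set.univ ∧
      (∀ α ∈ S, ∀ γ ∈ S, α < γ →
        ENNReal.ofReal (γ - α) <
          T.setD (Function.update F β F' α) (Function.update G β G' γ) * (c : ℝ≥0∞)) := by
  classical
  by_cases hP : ∃ p ∈ S ×ˢ S, p.1 < p.2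
  case neg =>
    refine ⟨Set.univ, Set.univ, isClosed_univ, isClosed_univ, subset_univ _, subset_univ _,
      univ_union _, ?_⟩
    intro α hα γ hγ hlt
    exact absurd ⟨(α, γ), Finset.mem_product.mpr ⟨hα, hγ⟩, hlt⟩ hP
  case pos =>
    obtain ⟨p₀, hp₀S, hp₀lt⟩ := hP
    -- c ≠ 0
    have hc0 : (c : ℝ≥0∞) ≠ 0 := by
      intro h0
      have := happ p₀.1 (Finset.mem_product.mp hp₀S).1 p₀.2 (Finset.mem_product.mp hp₀S).2 hp₀lt
      rw [h0, mul_zero] at this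
      exact (not_lt_of_ge zero_le) this
    have hcT : (c : ℝ≥0∞) ≠ ⊤ := ENNReal.coe_ne_top
    set q : ℝ → ℝ → ℝ≥0∞ := fun α γ => ENNReal.ofReal (γ - α) / (c : ℝ≥0∞) with hq
    have hqT : ∀ α γ, q α γ ≠ ⊤ := fun α γ =>
      (ENNReal.div_lt_top ENNReal.ofReal_ne_top hc0).ne
    have hq_lt : ∀ α ∈ S, ∀ γ ∈ S, α < γ → q α γ < T.setD (F α) (G γ) := by
      intro α hα γ hγ hlt
      exact (ENNReal.div_lt_iff (Or.inl hc0) (Or.inl hcT)).mpr (happ α hα γ hγ hlt)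
    set P : Finset (ℝ × ℝ) := (S ×ˢ S).filter (fun p => p.1 < p.2) with hPdef
    have hPne : P.Nonempty := ⟨p₀, Finset.mem_filter.mpr ⟨hp₀S, hp₀lt⟩⟩
    set η : ℝ≥0∞ :=
      (P.inf' hPne (fun p => T.setD (F p.1) (G p.2) - q p.1 p.2) ⊓ 1) / 12 with hηdef
    have hη0 : 0 < η := by
      apply ENNReal.div_pos _ (by norm_num)
      have : (0 : ℝ≥0∞) < P.inf' hPne (fun p => T.setD (F p.1) (G p.2) - q p.1 p.2) ⊓ 1 := by
        refine lt_min ?_ one_pos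
        rw [Finset.lt_inf'_iff]
        intro p hp
        have hpS := Finset.mem_filter.mp hp
        have := hq_lt p.1 (Finset.mem_product.mp hpS.1).1 p.2 (Finset.mem_product.mp hpS.1).2
          hpS.2
        exact tsub_pos_iff_lt.mpr this
      exact this.ne'
    have hηT : η ≠ ⊤ := by
      have : η ≤ 1 / 12 := by
        rw [hηdef]
        exact ENNReal.div_le_div_right inf_le_right 12
      exact (lt_of_le_of_lt this (by norm_num)).ne
    -- the key quantitative inequality
    have hkey : ∀ α ∈ S, ∀ γ ∈ S, α < γ → q α γ + 12 * η ≤ T.setD (F α) (G γ) := by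
      intro α hα γ hγ hlt
      have hmem : (α, γ) ∈ P := Finset.mem_filter.mpr ⟨Finset.mem_product.mpr ⟨hα, hγ⟩, hlt⟩
      have h1 : 12 * η ≤ T.setD (F α) (G γ) - q α γ := by
        have h2 : 12 * η ≤ P.inf' hPne (fun p => T.setD (F p.1) (G p.2) - q p.1 p.2) ⊓ 1 := by
          rw [hηdef, mul_comm]
          exact (ENNReal.div_mul_cancel (by norm_num) (by norm_num)).le
        exact h2.trans (le_trans inf_le_left (Finset.inf'_le _ hmem))
      calc q α γ + 12 * η ≤ q α γ + (T.setD (F α) (G γ) - q α γ) := by gcongr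
        _ = T.setD (F α) (G γ) := by
            rw [add_comm]
            exact tsub_add_cancel_of_le (hq_lt α hα γ hγ hlt).le
    -- radii
    set aR : ℝ → ℝ≥0∞ := fun γ => q β γ + 4 * η with haR
    set bR : ℝ → ℝ≥0∞ := fun α => q α β + 4 * η with hbR
    have h4η : 0 < 4 * η := ENNReal.mul_pos (by norm_num) hη0.ne'
    have haR0 : ∀ γ, 0 < aR γ := fun γ =>
      lt_of_lt_of_le h4η (le_add_self (a := 4 * η) (b := q β γ))
    have hbR0 : ∀ α, 0 < bR α :=
      fun α => lt_of_lt_of_le h4η (le_add_self (a := 4 * η) (b := q α β))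
    have haRT : ∀ γ, aR γ ≠ ⊤ := fun γ => by
      simp [haR, ENNReal.add_ne_top, hqT, ENNReal.mul_ne_top, hηT]
    have hbRT : ∀ α, bR α ≠ ⊤ := fun α => by
      simp [hbR, ENNReal.add_ne_top, hqT, ENNReal.mul_ne_top, hηT]
    -- the "must be in G'" and "must be in F'" closed sets
    set K : Set X := ⋃ γ ∈ S.filter (fun γ => β < γ), {x | T.ptD x (G γ) ≤ aR γ} with hK
    set L : Set X := ⋃ α ∈ S.filter (fun α => α < β), {x | T.ptD x (F α) ≤ bR α} with hL
    have hKc : IsClosed K := isClosed_biUnion_finset fun γ hγ =>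
      hT.2 (G γ) (hG γ (Finset.mem_filter.mp hγ).1) (aR γ) (haR0 γ)
    have hLc : IsClosed L := isClosed_biUnion_finset fun α hα =>
      hT.2 (F α) (hF α (Finset.mem_filter.mp hα).1) (bR α) (hbR0 α)
    -- additivity of q along α < β < γ
    have hq_add : ∀ α γ : ℝ, α < β → β < γ → q α β + q β γ = q α γ := by
      intro α γ h1 h2
      rw [hq]
      simp only
      rw [ENNReal.div_add_div_same, ← ENNReal.ofReal_add (by linarith) (by linarith)]
      ring_nf
    -- separation of K and L
    have hsep : 2 * η ≤ T.setD K L := by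
      refine T.le_setD' ?_
      intro x hx y hy
      rw [hK, mem_iUnion₂] at hx
      obtain ⟨γ, hγm, hxγ⟩ := hx
      rw [hL, mem_iUnion₂] at hy
      obtain ⟨α, hαm, hyα⟩ := hy
      obtain ⟨hγS, hβγ⟩ := Finset.mem_filter.mp hγm
      obtain ⟨hαS, hαβ⟩ := Finset.mem_filter.mp hαm
      -- pick approximate nearest points
      have hx' : T.ptD x (G γ) < aR γ + η :=
        lt_of_le_of_lt hxγ (ENNReal.lt_add_right (haRT γ) hη0.ne')
      have hy' : T.ptD y (F α) < bR α + η :=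
        lt_of_le_of_lt hyα (ENNReal.lt_add_right (hbRT α) hη0.ne')
      obtain ⟨g, hgG, hgd⟩ := T.exists_of_ptD_lt hx'
      obtain ⟨f, hfF, hfd⟩ := T.exists_of_ptD_lt hy'
      have htri : T.d f g ≤ T.d y f + T.d y x + T.d x g := by
        calc T.d f g ≤ T.d f x + T.d x g := T.d_triangle f x g
          _ ≤ (T.d f y + T.d y x) + T.d x g := by gcongr; exact T.d_triangle f y x
          _ = T.d y f + T.d y x + T.d x g := by rw [T.d_symm f y]
      have hchain : q α γ + 12 * η ≤ (bR α + η) + T.d y x + (aR γ + η) := by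
        calc q α γ + 12 * η ≤ T.setD (F α) (G γ) := hkey α hαS γ hγS (hαβ.trans hβγ)
          _ ≤ T.d f g := T.setD_le_d' hfF hgG
          _ ≤ T.d y f + T.d y x + T.d x g := htri
          _ ≤ (bR α + η) + T.d y x + (aR γ + η) := by gcongr
      have hA : q α β + q β γ ≠ ⊤ := by
        simp [ENNReal.add_ne_top, hqT]
      have hrw : (bR α + η) + T.d y x + (aR γ + η) =
          ((q α β + q β γ) + 10 * η) + T.d y x := by
        rw [haR, hbR]; ring
      have hrw2 : q α γ + 12 * η = ((q α β + q β γ) + 10 * η) + 2 * η := by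
        rw [hq_add α γ hαβ hβγ]; ring
      rw [hrw, hrw2] at hchain
      rw [T.d_symm x y]
      have hAη : (q α β + q β γ) + 10 * η ≠ ⊤ := by
        simp [ENNReal.add_ne_top, hqT, ENNReal.mul_ne_top, hηT]
      exact (ENNReal.add_le_add_iff_left hAη).mp hchain
    have hpos : 0 < T.setD K L := lt_of_lt_of_le (ENNReal.mul_pos (by norm_num) hη0.ne') hsep
    obtain ⟨U, V, hU, hV, hKU, hLV, hUV⟩ := hT.1 K L hKc hLc hpos
    refine ⟨F β ∪ Uᶜ, G β ∪ Vᶜ, (hF β hβ).union hU.isClosed_compl,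
      (hG β hβ).union hV.isClosed_compl, subset_union_left, subset_union_left, ?_, ?_⟩
    · apply eq_univ_of_univ_subset
      intro x _
      by_cases hxU : x ∈ U
      · exact Or.inr (Or.inr (disjoint_left.mp hUV hxU))
      · exact Or.inl (Or.inr hxU)
    · intro α hα γ hγ hlt
      by_cases hαβ : α = β
      · subst hαβ
        have hγβ : γ ≠ α := hlt.ne'
        rw [Function.update_self, Function.update_of_ne hγβ]
        -- bound: setD (F α ∪ Uᶜ) (G γ) ≥ aR γ
        have hbound : aR γ ≤ T.setD (F α ∪ Uᶜ) (G γ) := by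
          refine T.le_setD' ?_
          intro x hx g hg
          rcases hx with hx | hx
          · calc aR γ ≤ q α γ + 12 * η := by simp only [haR]; exact add_le_add_right (mul_le_mul_left (by norm_num) η) _
              _ ≤ T.setD (F α) (G γ) := hkey α hα γ hγ hlt
              _ ≤ T.d x g := T.setD_le_d' hx hg
          · have hxK : x ∉ K := fun h => hx (hKU h)
            have : ¬ T.ptD x (G γ) ≤ aR γ := by
              intro hle
              exact hxK (mem_iUnion₂.mpr ⟨γ, Finset.mem_filter.mpr ⟨hγ, hlt⟩, hle⟩)
            exact (not_le.mp this).le.trans (T.ptD_le_d' x hg)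
        calc ENNReal.ofReal (γ - α) < ENNReal.ofReal (γ - α) + (4 * η) * c := by
              refine ENNReal.lt_add_right ENNReal.ofReal_ne_top ?_
              exact mul_ne_zero (mul_ne_zero (by norm_num) hη0.ne') hc0
          _ = (q α γ + 4 * η) * c := by
              rw [add_mul, ENNReal.div_mul_cancel hc0 hcT]
          _ = aR γ * c := by rw [haR]
          _ ≤ T.setD (F α ∪ Uᶜ) (G γ) * c := by gcongr
      · by_cases hγβ : γ = β
        · subst hγβ
          rw [Function.update_of_ne hαβ, Function.update_self]
          have hbound : bR α ≤ T.setD (F α) (G γ ∪ Vᶜ) := by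
            refine T.le_setD' ?_
            intro x hx g hg
            rcases hg with hg | hg
            · calc bR α ≤ q α γ + 12 * η := by simp only [hbR]; exact add_le_add_right (mul_le_mul_left (by norm_num) η) _
                _ ≤ T.setD (F α) (G γ) := hkey α hα γ hγ hlt
                _ ≤ T.d x g := T.setD_le_d' hx hg
            · have hgL : g ∉ L := fun h => hg (hLV h)
              have : ¬ T.ptD g (F α) ≤ bR α := by
                intro hle
                exact hgL (mem_iUnion₂.mpr ⟨α, Finset.mem_filter.mpr ⟨hα, hlt⟩, hle⟩)
              have h2 : bR α ≤ T.d g x := (not_le.mp this).le.trans (T.ptD_le_d' g hx)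
              rwa [T.d_symm g x] at h2
          calc ENNReal.ofReal (γ - α) < ENNReal.ofReal (γ - α) + (4 * η) * c := by
                refine ENNReal.lt_add_right ENNReal.ofReal_ne_top ?_
                exact mul_ne_zero (mul_ne_zero (by norm_num) hη0.ne') hc0
            _ = (q α γ + 4 * η) * c := by
                rw [add_mul, ENNReal.div_mul_cancel hc0 hcT]
            _ = bR α * c := by rw [hbR]
            _ ≤ T.setD (F α) (G γ ∪ Vᶜ) * c := by gcongr
        · rw [Function.update_of_ne hαβ, Function.update_of_ne hγβ]
          exact happ α hα γ hγ hlt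
end

section
/- In a normal topometric space X, every finite c-Lipschitz approximation {(F_α,G_α) : α ∈ S} (S ⊆ ℝ finite, F_α, G_α closed, F_α ∪ G_α = X, and d(F_α,G_β)·c > β−α for α < β in S) approximates some continuous c-Lipschitz function f : X → ℝ with values in the convex hull I of S; that is, f ≤ α on F_α and f ≥ α on G_α for all α ∈ S. -/
open scoped ENNReal NNReal
open Set

namespace ApproxProof

open TopometricOn

variable {X : Type*} [TopologicalSpace X] {T : TopometricOn X}

lemma ptD_le_d (T : TopometricOn X) {y : X} {F : Set X} (x : X) (hy : y ∈ F) :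
    T.ptD x F ≤ T.d x y := iInf₂_le y hy

lemma ptD_self (T : TopometricOn X) {x : X} {F : Set X} (hx : x ∈ F) : T.ptD x F = 0 :=
  le_antisymm (by simpa [T.d_self] using ptD_le_d T x hx) zero_le

lemma setD_le_d (T : TopometricOn X) {x y : X} {F G : Set X} (hx : x ∈ F) (hy : y ∈ G) :
    T.setD F G ≤ T.d x y :=
  le_trans (iInf₂_le (f := fun x _ => ⨅ y ∈ G, T.d x y) x hx) (iInf₂_le y hy)

lemma le_setD (T : TopometricOn X) {r : ℝ≥0∞} {F G : Set X}
    (h : ∀ x ∈ F, ∀ y ∈ G, r ≤ T.d x y) : r ≤ T.setD F G :=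
  le_iInf₂ fun x hx => le_iInf₂ fun y hy => h x hx y hy

lemma setD_le_ptD_add (T : TopometricOn X) (F G : Set X) (x y : X) :
    T.setD F G ≤ T.ptD x F + T.d x y + T.ptD y G := by
  rcases eq_or_ne (T.ptD x F) ⊤ with hF | hF
  · simp [hF]
  rcases eq_or_ne (T.ptD y G) ⊤ with hG | hG
  · simp [hG]
  refine ENNReal.le_of_forall_pos_le_add fun ε hε hlt => ?_
  have hε2 : (0:ℝ≥0∞) < ε / 2 := by
    simp [ENNReal.div_pos_iff, hε.ne']
  have h1 : T.ptD x F < T.ptD x F + ε / 2 := ENNReal.lt_add_right hF hε2.ne'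
  have h2 : T.ptD y G < T.ptD y G + ε / 2 := ENNReal.lt_add_right hG hε2.ne'
  rw [ptD, iInf_lt_iff] at h1 h2
  obtain ⟨z, h1⟩ := h1
  obtain ⟨w, h2⟩ := h2
  rw [iInf_lt_iff] at h1 h2
  obtain ⟨hz, h1⟩ := h1
  obtain ⟨hw, h2⟩ := h2
  have hd : T.setD F G ≤ T.d z w := setD_le_d T hz hw
  have tri : T.d z w ≤ T.d x z + T.d x y + T.d y w := by
    calc T.d z w ≤ T.d z x + T.d x w := T.d_triangle _ _ _
    _ ≤ T.d z x + (T.d x y + T.d y w) := by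
        exact add_le_add_right (T.d_triangle _ _ _) _
    _ = T.d x z + T.d x y + T.d y w := by rw [T.d_symm z x, add_assoc]
  calc T.setD F G ≤ T.d x z + T.d x y + T.d y w := hd.trans tri
  _ ≤ (T.ptD x F + ε/2) + T.d x y + (T.ptD y G + ε/2) := by
      exact add_le_add (add_le_add h1.le le_rfl) h2.le
  _ = T.ptD x F + T.d x y + T.ptD y G + (ε/2 + ε/2) := by ring
  _ = T.ptD x F + T.d x y + T.ptD y G + ε := by rw [ENNReal.add_halves]

/-- A monotone finite approximation datum. -/
structure Approx (T : TopometricOn X) (c : ℝ≥0) (a b : ℝ) where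
  S : Finset ℝ
  F : ℝ → Set X
  G : ℝ → Set X
  subset : ∀ α ∈ S, α ∈ Icc a b
  closedF : ∀ α ∈ S, IsClosed (F α)
  closedG : ∀ α ∈ S, IsClosed (G α)
  total : ∀ α ∈ S, F α ∪ G α = univ
  monoF : ∀ α ∈ S, ∀ β ∈ S, α ≤ β → F α ⊆ F β
  monoG : ∀ α ∈ S, ∀ β ∈ S, α ≤ β → G β ⊆ G α
  dist : ∀ α ∈ S, ∀ β ∈ S, α < β →
    ENNReal.ofReal (β - α) < T.setD (F α) (G β) * (c : ℝ≥0∞)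

def Ext {c : ℝ≥0} {a b : ℝ} (A A' : Approx T c a b) : Prop :=
  A.S ⊆ A'.S ∧ (∀ t ∈ A.S, A'.F t = A.F t) ∧ (∀ t ∈ A.S, A'.G t = A.G t)

lemma Ext.refl {c : ℝ≥0} {a b : ℝ} (A : Approx T c a b) : Ext A A :=
  ⟨subset_rfl, fun _ _ => rfl, fun _ _ => rfl⟩

lemma Ext.trans {c : ℝ≥0} {a b : ℝ} {A B C : Approx T c a b}
    (h1 : Ext A B) (h2 : Ext B C) : Ext A C :=
  ⟨h1.1.trans h2.1, fun t ht => (h2.2.1 t (h1.1 ht)).trans (h1.2.1 t ht),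
    fun t ht => (h2.2.2 t (h1.1 ht)).trans (h1.2.2 t ht)⟩


lemma insert_step (hT : T.IsNormal) {c : ℝ≥0} (hc : c ≠ 0) {a b : ℝ}
    (A : Approx T c a b) {γ : ℝ} (hγ : γ ∈ Ioo a b) :
    ∃ A' : Approx T c a b, Ext A A' ∧ γ ∈ A'.S := by
  classical
  by_cases hγS : γ ∈ A.S
  · exact ⟨A, Ext.refl A, hγS⟩
  obtain ⟨haγ, hγb⟩ := hγ
  have hc0 : (c : ℝ≥0∞) ≠ 0 := by exact_mod_cast hc
  have hcT : (c : ℝ≥0∞) ≠ ⊤ := ENNReal.coe_ne_top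
  have hcR : (0:ℝ) < (c:ℝ) := NNReal.coe_pos.mpr (pos_iff_ne_zero.mpr hc)
  have hmulc : ∀ r : ℝ, 0 ≤ r →
      ENNReal.ofReal (r / (c:ℝ)) * (c : ℝ≥0∞) = ENNReal.ofReal r := by
    intro r hr
    rw [← ENNReal.ofReal_coe_nnreal, ← ENNReal.ofReal_mul (by positivity),
      div_mul_cancel₀ _ hcR.ne']
  set P : Finset (ℝ × ℝ) := (A.S ×ˢ A.S).filter (fun p => p.1 < p.2) with hP
  set g : ℝ × ℝ → ℝ≥0∞ := fun p =>
    if T.setD (A.F p.1) (A.G p.2) = ⊤ then 1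
    else (T.setD (A.F p.1) (A.G p.2) - ENNReal.ofReal ((p.2 - p.1) / (c:ℝ))) / 3 with hg
  have hDlt : ∀ p ∈ P, ENNReal.ofReal ((p.2 - p.1) / (c:ℝ)) < T.setD (A.F p.1) (A.G p.2) := by
    intro p hp
    simp only [hP, Finset.mem_filter, Finset.mem_product] at hp
    have hd := A.dist p.1 hp.1.1 p.2 hp.1.2 hp.2
    refine (ENNReal.mul_lt_mul_iff_left hc0 hcT).mp ?_
    rw [hmulc _ (sub_nonneg.mpr hp.2.le)]
    exact hd
  have hgpos : ∀ p ∈ P, 0 < g p := by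
    intro p hp
    simp only [hg]
    split
    · norm_num
    · exact ENNReal.div_pos (tsub_pos_of_lt (hDlt p hp)).ne' (by norm_num)
  set ε : ℝ≥0∞ := min 1 (P.inf g) with hε
  have hε0 : 0 < ε := by
    rw [hε, lt_min_iff]
    exact ⟨one_pos, (Finset.lt_inf_iff ENNReal.zero_lt_top).mpr hgpos⟩
  have hεT : ε ≠ ⊤ := ((min_le_left _ _).trans_lt ENNReal.one_lt_top).ne
  have hkey : ∀ δ ∈ A.S, ∀ δ' ∈ A.S, δ < δ' →
      ENNReal.ofReal ((δ' - δ) / (c:ℝ)) + 3 * ε ≤ T.setD (A.F δ) (A.G δ') := by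
    intro δ hδ δ' hδ' hlt
    have hpP : (δ, δ') ∈ P := by
      simp [hP, Finset.mem_filter, Finset.mem_product, hδ, hδ', hlt]
    rcases eq_or_ne (T.setD (A.F δ) (A.G δ')) ⊤ with htop | htop
    · rw [htop]; exact le_top
    have hεg : ε ≤ g (δ, δ') := le_trans (min_le_right _ _) (Finset.inf_le hpP)
    rw [hg] at hεg
    simp only [if_neg htop] at hεg
    have h3 : 3 * ε ≤ T.setD (A.F δ) (A.G δ') - ENNReal.ofReal ((δ' - δ) / (c:ℝ)) := by
      rw [mul_comm]
      exact (ENNReal.le_div_iff_mul_le (Or.inl (by norm_num)) (Or.inl (by norm_num))).mp hεg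
    calc ENNReal.ofReal ((δ' - δ) / (c:ℝ)) + 3 * ε
        ≤ ENNReal.ofReal ((δ' - δ) / (c:ℝ)) +
          (T.setD (A.F δ) (A.G δ') - ENNReal.ofReal ((δ' - δ) / (c:ℝ))) :=
          add_le_add_right h3 _
      _ = T.setD (A.F δ) (A.G δ') := add_tsub_cancel_of_le (hDlt _ hpP).le
  set s : ℝ → ℝ≥0∞ := fun δ => ENNReal.ofReal ((γ - δ) / (c:ℝ)) + ε with hs
  set s' : ℝ → ℝ≥0∞ := fun δ' => ENNReal.ofReal ((δ' - γ) / (c:ℝ)) + ε with hs'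
  have hs0 : ∀ δ, 0 < s δ := fun δ => lt_of_lt_of_le hε0 le_add_self
  have hs'0 : ∀ δ', 0 < s' δ' := fun δ' => lt_of_lt_of_le hε0 le_add_self
  set SA := A.S.filter (fun δ => δ < γ) with hSA
  set SB := A.S.filter (fun δ => γ < δ) with hSB
  set Aset : Set X := ⋃ δ ∈ SA, {x | T.ptD x (A.F δ) ≤ s δ} with hAset
  set Bset : Set X := ⋃ δ ∈ SB, {x | T.ptD x (A.G δ) ≤ s' δ} with hBset
  have hAclosed : IsClosed Aset :=
    isClosed_biUnion_finset fun δ hδ =>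
      hT.2 _ (A.closedF δ (Finset.mem_filter.mp hδ).1) _ (hs0 δ)
  have hBclosed : IsClosed Bset :=
    isClosed_biUnion_finset fun δ hδ =>
      hT.2 _ (A.closedG δ (Finset.mem_filter.mp hδ).1) _ (hs'0 δ)
  have hAB : ∀ x ∈ Aset, ∀ y ∈ Bset, ε ≤ T.d x y := by
    intro x hx y hy
    rw [hAset, mem_iUnion₂] at hx
    rw [hBset, mem_iUnion₂] at hy
    obtain ⟨δ, hδSA, hxball⟩ := hx
    obtain ⟨δ', hδ'SB, hyball⟩ := hy
    rw [hSA, Finset.mem_filter] at hδSA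
    rw [hSB, Finset.mem_filter] at hδ'SB
    obtain ⟨hδS, hδγ⟩ := hδSA
    obtain ⟨hδ'S, hδ'γ⟩ := hδ'SB
    have hpair := hkey δ hδS δ' hδ'S (hδγ.trans hδ'γ)
    have hle2 : T.setD (A.F δ) (A.G δ') ≤ s δ + T.d x y + s' δ' :=
      le_trans (setD_le_ptD_add T (A.F δ) (A.G δ') x y)
        (add_le_add (add_le_add hxball le_rfl) hyball)
    have hsum : s δ + s' δ' = ENNReal.ofReal ((δ' - δ) / (c:ℝ)) + 2 * ε := by
      have hu : (0:ℝ) ≤ (γ - δ) / (c:ℝ) := div_nonneg (by linarith) hcR.le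
      have hv : (0:ℝ) ≤ (δ' - γ) / (c:ℝ) := div_nonneg (by linarith) hcR.le
      have huv : (δ' - δ) / (c:ℝ) = (γ - δ) / (c:ℝ) + (δ' - γ) / (c:ℝ) := by ring
      rw [hs, hs', huv, ENNReal.ofReal_add hu hv]
      ring
    have hchain : ENNReal.ofReal ((δ' - δ) / (c:ℝ)) + 2 * ε + ε ≤
        ENNReal.ofReal ((δ' - δ) / (c:ℝ)) + 2 * ε + T.d x y := by
      calc ENNReal.ofReal ((δ' - δ) / (c:ℝ)) + 2 * ε + ε
          = ENNReal.ofReal ((δ' - δ) / (c:ℝ)) + 3 * ε := by ring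
        _ ≤ T.setD (A.F δ) (A.G δ') := hpair
        _ ≤ s δ + T.d x y + s' δ' := hle2
        _ = (s δ + s' δ') + T.d x y := by ring
        _ = ENNReal.ofReal ((δ' - δ) / (c:ℝ)) + 2 * ε + T.d x y := by rw [hsum]
    exact (ENNReal.add_le_add_iff_left
      (ENNReal.add_ne_top.mpr ⟨ENNReal.ofReal_ne_top,
        ENNReal.mul_ne_top (by norm_num) hεT⟩)).mp hchain
  have hsetDAB : 0 < T.setD Aset Bset := lt_of_lt_of_le hε0 (le_setD T hAB)
  obtain ⟨U, V, hUo, hVo, hAU, hBV, hUV⟩ := hT.1 Aset Bset hAclosed hBclosed hsetDAB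
  have hFsubA : ∀ δ ∈ A.S, δ < γ → A.F δ ⊆ Aset := by
    intro δ hδ hlt x hx
    rw [hAset]
    exact mem_iUnion₂.mpr ⟨δ, Finset.mem_filter.mpr ⟨hδ, hlt⟩, by simp [ptD_self T hx]⟩
  have hGsubB : ∀ δ ∈ A.S, γ < δ → A.G δ ⊆ Bset := by
    intro δ hδ hlt x hx
    rw [hBset]
    exact mem_iUnion₂.mpr ⟨δ, Finset.mem_filter.mpr ⟨hδ, hlt⟩, by simp [ptD_self T hx]⟩
  have hUVc : U ⊆ Vᶜ := fun x hx hx' => (Set.disjoint_left.mp hUV hx) hx'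
  have hVUc : V ⊆ Uᶜ := fun x hx hx' => (Set.disjoint_left.mp hUV hx') hx
  have hFγ : ∀ δ ∈ A.S, δ < γ → A.F δ ⊆ Vᶜ :=
    fun δ hδ hlt => ((hFsubA δ hδ hlt).trans hAU).trans hUVc
  have hGγ : ∀ δ ∈ A.S, γ < δ → A.G δ ⊆ Uᶜ :=
    fun δ hδ hlt => ((hGsubB δ hδ hlt).trans hBV).trans hVUc
  have hVFb : ∀ δ ∈ A.S, γ < δ → Vᶜ ⊆ A.F δ := by
    intro δ hδ hlt x hx
    have hxu : x ∈ A.F δ ∪ A.G δ := by rw [A.total δ hδ]; trivial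
    rcases hxu with h | h
    · exact h
    · exact absurd ((hGsubB δ hδ hlt).trans hBV h) hx
  have hUGb : ∀ δ ∈ A.S, δ < γ → Uᶜ ⊆ A.G δ := by
    intro δ hδ hlt x hx
    have hxu : x ∈ A.F δ ∪ A.G δ := by rw [A.total δ hδ]; trivial
    rcases hxu with h | h
    · exact absurd ((hFsubA δ hδ hlt).trans hAU h) hx
    · exact h
  have hdFγ : ∀ δ ∈ A.S, δ < γ → s δ ≤ T.setD (A.F δ) Uᶜ := by
    intro δ hδ hlt
    refine le_setD T fun x hx y hy => ?_
    have hyb : ¬ T.ptD y (A.F δ) ≤ s δ := by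
      intro h
      exact hy (hAU (mem_iUnion₂.mpr ⟨δ, Finset.mem_filter.mpr ⟨hδ, hlt⟩, h⟩))
    have h1 : T.ptD y (A.F δ) ≤ T.d x y := by
      rw [T.d_symm]; exact ptD_le_d T y hx
    exact le_trans (not_le.mp hyb).le h1
  have hdGγ : ∀ δ ∈ A.S, γ < δ → s' δ ≤ T.setD Vᶜ (A.G δ) := by
    intro δ hδ hlt
    refine le_setD T fun x hx y hy => ?_
    have hxb : ¬ T.ptD x (A.G δ) ≤ s' δ := by
      intro h
      exact hx (hBV (mem_iUnion₂.mpr ⟨δ, Finset.mem_filter.mpr ⟨hδ, hlt⟩, h⟩))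
    exact le_trans (not_le.mp hxb).le (ptD_le_d T x hy)
  have hsc : ∀ δ, δ < γ → ENNReal.ofReal (γ - δ) < s δ * (c : ℝ≥0∞) := by
    intro δ hlt
    rw [hs]
    simp only
    rw [add_mul, hmulc _ (sub_nonneg.mpr hlt.le)]
    exact ENNReal.lt_add_right ENNReal.ofReal_ne_top (mul_ne_zero hε0.ne' hc0)
  have hs'c : ∀ δ, γ < δ → ENNReal.ofReal (δ - γ) < s' δ * (c : ℝ≥0∞) := by
    intro δ hlt
    rw [hs']
    simp only
    rw [add_mul, hmulc _ (sub_nonneg.mpr hlt.le)]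
    exact ENNReal.lt_add_right ENNReal.ofReal_ne_top (mul_ne_zero hε0.ne' hc0)
  refine ⟨⟨insert γ A.S, fun t => if t = γ then Vᶜ else A.F t,
      fun t => if t = γ then Uᶜ else A.G t, ?_, ?_, ?_, ?_, ?_, ?_, ?_⟩,
      ⟨Finset.subset_insert _ _,
        fun t ht => if_neg (ne_of_mem_of_not_mem ht hγS),
        fun t ht => if_neg (ne_of_mem_of_not_mem ht hγS)⟩,
      Finset.mem_insert_self _ _⟩
  · intro α hα
    rcases Finset.mem_insert.mp hα with h | h
    · exact h ▸ ⟨haγ.le, hγb.le⟩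
    · exact A.subset α h
  · intro α hα
    rcases Finset.mem_insert.mp hα with h | h
    · simp only [if_pos h]
      exact hVo.isClosed_compl
    · simp only [if_neg (ne_of_mem_of_not_mem h hγS)]
      exact A.closedF α h
  · intro α hα
    rcases Finset.mem_insert.mp hα with h | h
    · simp only [if_pos h]
      exact hUo.isClosed_compl
    · simp only [if_neg (ne_of_mem_of_not_mem h hγS)]
      exact A.closedG α h
  · intro α hα
    rcases Finset.mem_insert.mp hα with h | h
    · simp only [if_pos h]
      rw [← Set.compl_inter, Set.inter_comm, hUV.inter_eq, Set.compl_empty]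
    · simp only [if_neg (ne_of_mem_of_not_mem h hγS), if_neg (ne_of_mem_of_not_mem h hγS)]
      exact A.total α h
  · intro α hα β hβ hle
    rcases Finset.mem_insert.mp hα with h | h <;> rcases Finset.mem_insert.mp hβ with h' | h'
    · subst h; subst h'; simp
    · subst h
      simp only [if_pos rfl, if_neg (ne_of_mem_of_not_mem h' hγS)]
      exact hVFb β h' (lt_of_le_of_ne hle (Ne.symm (ne_of_mem_of_not_mem h' hγS)))
    · subst h'
      simp only [if_pos rfl, if_neg (ne_of_mem_of_not_mem h hγS)]
      exact hFγ α h (lt_of_le_of_ne hle (ne_of_mem_of_not_mem h hγS))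
    · simp only [if_neg (ne_of_mem_of_not_mem h hγS), if_neg (ne_of_mem_of_not_mem h' hγS)]
      exact A.monoF α h β h' hle
  · intro α hα β hβ hle
    rcases Finset.mem_insert.mp hα with h | h <;> rcases Finset.mem_insert.mp hβ with h' | h'
    · subst h; subst h'; simp
    · subst h
      simp only [if_pos rfl, if_neg (ne_of_mem_of_not_mem h' hγS)]
      exact hGγ β h' (lt_of_le_of_ne hle (Ne.symm (ne_of_mem_of_not_mem h' hγS)))
    · subst h'
      simp only [if_pos rfl, if_neg (ne_of_mem_of_not_mem h hγS)]
      exact hUGb α h (lt_of_le_of_ne hle (ne_of_mem_of_not_mem h hγS))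
    · simp only [if_neg (ne_of_mem_of_not_mem h hγS), if_neg (ne_of_mem_of_not_mem h' hγS)]
      exact A.monoG α h β h' hle
  · intro α hα β hβ hlt
    rcases Finset.mem_insert.mp hα with h | h <;> rcases Finset.mem_insert.mp hβ with h' | h'
    · subst h; subst h'; exact absurd hlt (lt_irrefl _)
    · subst h
      simp only [if_pos rfl, if_neg (ne_of_mem_of_not_mem h' hγS)]
      exact lt_of_lt_of_le (hs'c β hlt) (mul_le_mul_left (hdGγ β h' hlt) _)
    · subst h'
      simp only [if_pos rfl, if_neg (ne_of_mem_of_not_mem h hγS)]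
      exact lt_of_lt_of_le (hsc α hlt) (mul_le_mul_left (hdFγ α h hlt) _)
    · simp only [if_neg (ne_of_mem_of_not_mem h hγS), if_neg (ne_of_mem_of_not_mem h' hγS)]
      exact A.dist α h β h' hlt



lemma initial (T : TopometricOn X) (S : Finset ℝ) (hS : S.Nonempty) (F G : ℝ → Set X) (c : ℝ≥0)
    (hF : ∀ α ∈ S, IsClosed (F α)) (hG : ∀ α ∈ S, IsClosed (G α))
    (htotal : ∀ α ∈ S, F α ∪ G α = Set.univ)
    (happ : ∀ α ∈ S, ∀ β ∈ S, α < β →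
      ENNReal.ofReal (β - α) < T.setD (F α) (G β) * (c : ℝ≥0∞)) :
    ∃ A : Approx T c (S.min' hS) (S.max' hS),
      A.S = S ∧ (∀ α ∈ S, F α ⊆ A.F α) ∧ (∀ α ∈ S, G α ⊆ A.G α) := by
  classical
  refine ⟨⟨S, fun α => ⋃ δ ∈ S.filter (fun δ => δ ≤ α), F δ,
      fun α => ⋃ δ ∈ S.filter (fun δ => α ≤ δ), G δ, ?_, ?_, ?_, ?_, ?_, ?_, ?_⟩, rfl, ?_, ?_⟩
  · exact fun α hα => ⟨S.min'_le α hα, S.le_max' α hα⟩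
  · exact fun α _ => isClosed_biUnion_finset fun δ hδ => hF δ (Finset.mem_filter.mp hδ).1
  · exact fun α _ => isClosed_biUnion_finset fun δ hδ => hG δ (Finset.mem_filter.mp hδ).1
  · intro α hα
    rw [eq_univ_iff_forall]
    intro x
    have hx : x ∈ F α ∪ G α := (htotal α hα) ▸ mem_univ x
    rcases hx with h | h
    · exact Or.inl (mem_iUnion₂.mpr ⟨α, Finset.mem_filter.mpr ⟨hα, le_rfl⟩, h⟩)
    · exact Or.inr (mem_iUnion₂.mpr ⟨α, Finset.mem_filter.mpr ⟨hα, le_rfl⟩, h⟩)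
  · intro α _ β _ hle x hx
    obtain ⟨δ, hδ, hxδ⟩ := mem_iUnion₂.mp hx
    exact mem_iUnion₂.mpr ⟨δ, Finset.mem_filter.mpr ⟨(Finset.mem_filter.mp hδ).1,
      le_trans (Finset.mem_filter.mp hδ).2 hle⟩, hxδ⟩
  · intro α _ β _ hle x hx
    obtain ⟨δ, hδ, hxδ⟩ := mem_iUnion₂.mp hx
    exact mem_iUnion₂.mpr ⟨δ, Finset.mem_filter.mpr ⟨(Finset.mem_filter.mp hδ).1,
      le_trans hle (Finset.mem_filter.mp hδ).2⟩, hxδ⟩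
  · intro α hα β hβ hlt
    set P0 := (S ×ˢ S).filter (fun p => p.1 ≤ α ∧ β ≤ p.2) with hP0
    have hne : P0.Nonempty :=
      ⟨(α, β), by simp [hP0, Finset.mem_filter, Finset.mem_product, hα, hβ]⟩
    set m := P0.inf' hne (fun p => T.setD (F p.1) (G p.2)) with hm
    obtain ⟨p₀, hp₀, hinf⟩ := Finset.exists_mem_eq_inf' hne (fun p => T.setD (F p.1) (G p.2))
    have hp₀' := hp₀
    simp only [hP0, Finset.mem_filter, Finset.mem_product] at hp₀'
    obtain ⟨⟨hp1S, hp2S⟩, hp1α, hp2β⟩ := hp₀'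
    have hp12 : p₀.1 < p₀.2 := lt_of_le_of_lt hp1α (lt_of_lt_of_le hlt hp2β)
    have h1 : ENNReal.ofReal (β - α) < m * c := by
      rw [hm, hinf]
      exact lt_of_le_of_lt (ENNReal.ofReal_le_ofReal (by linarith))
        (happ _ hp1S _ hp2S hp12)
    have h2 : m ≤ T.setD (⋃ δ ∈ S.filter (fun δ => δ ≤ α), F δ)
        (⋃ δ ∈ S.filter (fun δ => β ≤ δ), G δ) := by
      refine le_setD T fun x hx y hy => ?_
      obtain ⟨δ, hδ, hxδ⟩ := mem_iUnion₂.mp hx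
      obtain ⟨δ', hδ', hyδ'⟩ := mem_iUnion₂.mp hy
      refine le_trans (Finset.inf'_le _ (b := (δ, δ')) ?_) (setD_le_d T hxδ hyδ')
      simp only [hP0, Finset.mem_filter, Finset.mem_product]
      exact ⟨⟨(Finset.mem_filter.mp hδ).1, (Finset.mem_filter.mp hδ').1⟩,
        (Finset.mem_filter.mp hδ).2, (Finset.mem_filter.mp hδ').2⟩
    exact lt_of_lt_of_le h1 (mul_le_mul_left h2 _)
  · intro α hα x hx
    exact mem_iUnion₂.mpr ⟨α, Finset.mem_filter.mpr ⟨hα, le_rfl⟩, hx⟩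
  · intro α hα x hx
    exact mem_iUnion₂.mpr ⟨α, Finset.mem_filter.mpr ⟨hα, le_rfl⟩, hx⟩

end ApproxProof

open ApproxProof

/-- in a normal topometric space, every finite `c`-Lipschitz approximation
approximates a continuous `c`-Lipschitz function with values in the convex hull of `S`. -/
theorem approximation_approximates_function {X : Type*} [TopologicalSpace X]
    (T : TopometricOn X) (hT : T.IsNormal) (S : Finset ℝ) (hS : S.Nonempty)
    (F G : ℝ → Set X) (c : ℝ≥0)
    (hF : ∀ α ∈ S, IsClosed (F α)) (hG : ∀ α ∈ S, IsClosed (G α))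
    (htotal : ∀ α ∈ S, F α ∪ G α = Set.univ)
    (happ : ∀ α ∈ S, ∀ β ∈ S, α < β →
      ENNReal.ofReal (β - α) < T.setD (F α) (G β) * (c : ℝ≥0∞)) :
    ∃ f : X → ℝ, Continuous f ∧ (∀ x y, edist (f x) (f y) ≤ (c : ℝ≥0∞) * T.d x y) ∧
      (∀ x, f x ∈ convexHull ℝ (S : Set ℝ)) ∧
      (∀ α ∈ S, ∀ x ∈ F α, f x ≤ α) ∧ (∀ α ∈ S, ∀ x ∈ G α, α ≤ f x) := by
  classical
  set a := S.min' hS with ha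
  set b := S.max' hS with hb
  have hamem : a ∈ S := S.min'_mem hS
  have hbmem : b ∈ S := S.max'_mem hS
  have hab : a ≤ b := S.min'_le _ hbmem
  have hconv : Icc a b ⊆ convexHull ℝ (S : Set ℝ) := by
    rw [← segment_eq_Icc hab]
    exact (convex_convexHull ℝ _).segment_subset
      (subset_convexHull ℝ _ (Finset.mem_coe.mpr hamem))
      (subset_convexHull ℝ _ (Finset.mem_coe.mpr hbmem))
  rcases eq_or_lt_of_le hab with heq | hlt
  · -- degenerate case: S lies in a single point
    refine ⟨fun _ => a, continuous_const, ?_, ?_, ?_, ?_⟩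
    · intro x y; simp
    · intro x; exact hconv ⟨le_rfl, hab⟩
    · intro α hα x _; exact S.min'_le α hα
    · intro α hα x _; exact le_trans (S.le_max' α hα) heq.ge
  · have hc : c ≠ 0 := by
      intro h
      subst h
      have := happ a hamem b hbmem hlt
      simp at this
    obtain ⟨A0, hA0S, hA0F, hA0G⟩ := ApproxProof.initial T S hS F G c hF hG htotal happ
    obtain ⟨g, hg⟩ : ∃ g : ℕ → ℚ, Function.Surjective g :=
      ⟨_, (Denumerable.eqv ℚ).symm.surjective⟩
    set e : ℕ → ℝ := fun n =>
      if ((g n : ℚ) : ℝ) ∈ Ioo a b then ((g n : ℚ) : ℝ)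
      else (a + b) / 2 with he
    have hmid : (a + b) / 2 ∈ Ioo a b := ⟨by linarith, by linarith⟩
    have heIoo : ∀ n, e n ∈ Ioo a b := by
      intro n
      rw [he]
      dsimp only
      split
      · assumption
      · exact hmid
    have hstep : ∀ (A : Approx T c a b) (n : ℕ), ∃ A', Ext A A' ∧ e n ∈ A'.S :=
      fun A n => ApproxProof.insert_step hT hc A (heIoo n)
    choose step hext hmem using hstep
    set seq : ℕ → Approx T c a b := fun n => Nat.rec A0 (fun n An => step An n) n with hseq
    have hseqsucc : ∀ n, seq (n + 1) = step (seq n) n := fun n => rfl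
    have hchain : ∀ m n, m ≤ n → Ext (seq m) (seq n) := by
      intro m n h
      induction n with
      | zero =>
        rw [Nat.le_zero.mp h]
        exact Ext.refl _
      | succ n ih =>
        rcases h.lt_or_eq with h' | h'
        · have h2 := hext (seq n) n
          rw [← hseqsucc n] at h2
          exact (ih (Nat.lt_succ_iff.mp h')).trans h2
        · rw [h']
          exact Ext.refl _
    set M : X → Set ℝ :=
      fun x => {t | t = b ∨ ∃ n, t ∈ (seq n).S ∧ x ∈ (seq n).F t} with hM
    set f : X → ℝ := fun x => sInf (M x) with hf
    have hMb : ∀ x, b ∈ M x := fun x => Or.inl rfl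
    have hMlb : ∀ x, ∀ t ∈ M x, a ≤ t := by
      intro x t ht
      rcases ht with rfl | ⟨n, htn, _⟩
      · exact hab
      · exact ((seq n).subset t htn).1
    have hMub : ∀ x, ∀ t ∈ M x, t ≤ b := by
      intro x t ht
      rcases ht with rfl | ⟨n, htn, _⟩
      · exact le_rfl
      · exact ((seq n).subset t htn).2
    have hbdd : ∀ x, BddBelow (M x) := fun x => ⟨a, hMlb x⟩
    have hfa : ∀ x, a ≤ f x := fun x => le_csInf ⟨b, hMb x⟩ (hMlb x)
    have hfb : ∀ x, f x ≤ b := fun x => csInf_le (hbdd x) (hMb x)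
    have hfF : ∀ n t, t ∈ (seq n).S → ∀ x, x ∈ (seq n).F t → f x ≤ t :=
      fun n t ht x hx => csInf_le (hbdd x) (Or.inr ⟨n, ht, hx⟩)
    have hup : ∀ m n t u x, t ∈ (seq m).S → u ∈ (seq n).S → t ≤ u →
        x ∈ (seq m).F t → x ∈ (seq n).F u := by
      intro m n t u x htm hun htu hx
      have e1 := hchain m (max m n) (le_max_left _ _)
      have e2 := hchain n (max m n) (le_max_right _ _)
      have hxN : x ∈ (seq (max m n)).F t := by rw [e1.2.1 t htm]; exact hx
      have h3 := (seq (max m n)).monoF t (e1.1 htm) u (e2.1 hun) htu hxN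
      rwa [e2.2.1 u hun] at h3
    have hlt2 : ∀ n t x, t ∈ (seq n).S → f x < t → x ∈ (seq n).F t := by
      intro n t x ht hlt'
      obtain ⟨u, hu, hut⟩ := exists_lt_of_csInf_lt ⟨b, hMb x⟩ hlt'
      rcases hu with rfl | ⟨m, hum, hxm⟩
      · exact absurd hut (not_lt.mpr ((seq n).subset t ht).2)
      · exact hup m n u t x hum ht hut.le hxm
    have hGf : ∀ n t x, t ∈ (seq n).S → x ∈ (seq n).G t → t ≤ f x := by
      intro n t x ht hx
      refine le_csInf ⟨b, hMb x⟩ fun u hu => ?_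
      rcases hu with rfl | ⟨m, hum, hxm⟩
      · exact ((seq n).subset t ht).2
      · by_contra hlt'
        push_neg at hlt'
        have e1 := hchain m (max m n) (le_max_left _ _)
        have e2 := hchain n (max m n) (le_max_right _ _)
        have hxFN : x ∈ (seq (max m n)).F u := by rw [e1.2.1 u hum]; exact hxm
        have hxGN : x ∈ (seq (max m n)).G t := by rw [e2.2.2 t ht]; exact hx
        have hd := (seq (max m n)).dist u (e1.1 hum) t (e2.1 ht) hlt'
        have h0 : T.setD ((seq (max m n)).F u) ((seq (max m n)).G t) = 0 := by
          have h1 := ApproxProof.setD_le_d T hxFN hxGN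
          rw [T.d_self] at h1
          exact le_antisymm h1 zero_le
        rw [h0, zero_mul] at hd
        simp at hd
    have hdense : ∀ u v, a ≤ u → v ≤ b → u < v →
        ∃ n t, t ∈ (seq n).S ∧ u < t ∧ t < v := by
      intro u v hau hvb huv
      obtain ⟨q, hq1, hq2⟩ := exists_rat_btwn huv
      have hqIoo : (q : ℝ) ∈ Ioo a b := ⟨lt_of_le_of_lt hau hq1, lt_of_lt_of_le hq2 hvb⟩
      obtain ⟨nq, hnq⟩ := hg q
      refine ⟨nq + 1, q, ?_, hq1, hq2⟩
      have heq : e nq = (q : ℝ) := by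
        rw [he]
        dsimp only
        rw [hnq, if_pos hqIoo]
      have h2 := hmem (seq nq) nq
      rw [heq] at h2
      rwa [hseqsucc]
    have hcont : Continuous f := by
      rw [continuous_iff_lower_upperSemicontinuous]
      constructor
      · rw [lowerSemicontinuous_iff_isOpen_preimage]
        intro r
        refine isOpen_iff_forall_mem_open.mpr fun x hx => ?_
        simp only [mem_preimage, mem_Ioi] at hx
        rcases le_or_gt a r with har | har
        · obtain ⟨n, t, htS, hrt, htf⟩ := hdense r (f x) har (hfb x) hx
          refine ⟨((seq n).F t)ᶜ, ?_, ((seq n).closedF t htS).isOpen_compl, ?_⟩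
          · intro z hz
            simp only [mem_compl_iff] at hz
            have hzG : z ∈ (seq n).G t := by
              have h2 := (seq n).total t htS
              have hzu : z ∈ (seq n).F t ∪ (seq n).G t := h2 ▸ mem_univ z
              rcases hzu with h | h
              · exact absurd h hz
              · exact h
            exact lt_of_lt_of_le hrt (hGf n t z htS hzG)
          · intro hxF
            exact absurd (hfF n t htS x hxF) (not_le.mpr htf)
        · exact ⟨univ, fun z _ => lt_of_lt_of_le har (hfa z), isOpen_univ, mem_univ x⟩
      · rw [upperSemicontinuous_iff_isOpen_preimage]
        intro r
        refine isOpen_iff_forall_mem_open.mpr fun x hx => ?_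
        simp only [mem_preimage, mem_Iio] at hx
        rcases le_or_gt r b with hrb | hrb
        · obtain ⟨n, t, htS, hxt, htr⟩ := hdense (f x) r (hfa x) hrb hx
          obtain ⟨n', t', ht'S, htt', ht'r⟩ :=
            hdense t r (((seq n).subset t htS).1) hrb htr
          refine ⟨((seq n').G t')ᶜ, ?_, ((seq n').closedG t' ht'S).isOpen_compl, ?_⟩
          · intro z hz
            simp only [mem_compl_iff] at hz
            have hzF : z ∈ (seq n').F t' := by
              have h2 := (seq n').total t' ht'S
              have hzu : z ∈ (seq n').F t' ∪ (seq n').G t' := h2 ▸ mem_univ z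
              rcases hzu with h | h
              · exact h
              · exact absurd h hz
            exact lt_of_le_of_lt (hfF n' t' ht'S z hzF) ht'r
          · intro hxG
            have h3 := hGf n' t' x ht'S hxG
            have : f x < t' := lt_trans hxt htt'
            linarith
        · exact ⟨univ, fun z _ => lt_of_le_of_lt (hfb z) hrb, isOpen_univ, mem_univ x⟩
    have hkey : ∀ x y, (c : ℝ≥0∞) * T.d x y ≠ ⊤ →
        f y ≤ f x + ((c : ℝ≥0∞) * T.d x y).toReal := by
      intro x y hfin
      set r := ((c : ℝ≥0∞) * T.d x y).toReal with hr
      have hr0 : 0 ≤ r := ENNReal.toReal_nonneg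
      refine le_of_forall_pos_le_add fun ε hε => ?_
      rcases le_or_gt (f y) (f x) with h | h
      · linarith
      rcases le_or_gt (f y) (f x + ε) with h2 | h2
      · linarith
      have h1 : f x < min (f x + ε / 2) (f y) := lt_min (by linarith) h
      obtain ⟨n, α, hαS, hα1, hα2⟩ :=
        hdense (f x) _ (hfa x) ((min_le_right _ _).trans (hfb y)) h1
      have hαa : a ≤ α := ((seq n).subset α hαS).1
      have hαfy : α < f y := lt_of_lt_of_le hα2 (min_le_right _ _)
      have hβl : max α (f y - ε / 2) < f y := max_lt hαfy (by linarith)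
      obtain ⟨m, β, hβS, hβ1, hβ2⟩ :=
        hdense _ (f y) (le_trans hαa (le_max_left _ _)) (hfb y) hβl
      have hαβ : α < β := lt_of_le_of_lt (le_max_left _ _) hβ1
      have hxF : x ∈ (seq n).F α := hlt2 n α x hαS hα1
      have hyG : y ∈ (seq m).G β := by
        by_contra hyG
        have hyu : y ∈ (seq m).F β ∪ (seq m).G β := ((seq m).total β hβS) ▸ mem_univ y
        rcases hyu with hh | hh
        · exact absurd (hfF m β hβS y hh) (not_le.mpr hβ2)
        · exact hyG hh
      have e1 := hchain n (max n m) (le_max_left _ _)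
      have e2 := hchain m (max n m) (le_max_right _ _)
      have hxFN : x ∈ (seq (max n m)).F α := by rw [e1.2.1 α hαS]; exact hxF
      have hyGN : y ∈ (seq (max n m)).G β := by rw [e2.2.2 β hβS]; exact hyG
      have hd := (seq (max n m)).dist α (e1.1 hαS) β (e2.1 hβS) hαβ
      have hd2 : ENNReal.ofReal (β - α) ≤ (c : ℝ≥0∞) * T.d x y := by
        have hsd : T.setD ((seq (max n m)).F α) ((seq (max n m)).G β) ≤ T.d x y :=
          ApproxProof.setD_le_d T hxFN hyGN
        calc ENNReal.ofReal (β - α)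
            ≤ T.setD ((seq (max n m)).F α) ((seq (max n m)).G β) * c := hd.le
          _ ≤ T.d x y * c := mul_le_mul_left hsd _
          _ = (c : ℝ≥0∞) * T.d x y := mul_comm _ _
      have hba : β - α ≤ r := by
        rw [hr]
        exact (ENNReal.ofReal_le_iff_le_toReal hfin).mp hd2
      have g1 : f y - ε / 2 < β := lt_of_le_of_lt (le_max_right _ _) hβ1
      have g2 : α < f x + ε / 2 := lt_of_lt_of_le hα2 (min_le_left _ _)
      linarith
    have hlip : ∀ x y, edist (f x) (f y) ≤ (c : ℝ≥0∞) * T.d x y := by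
      intro x y
      rcases eq_or_ne ((c : ℝ≥0∞) * T.d x y) ⊤ with htop | htop
      · rw [htop]; exact le_top
      have h1 := hkey x y htop
      have hsymm : (c : ℝ≥0∞) * T.d y x = (c : ℝ≥0∞) * T.d x y := by rw [T.d_symm]
      have h3 := hkey y x (by rw [hsymm]; exact htop)
      rw [hsymm] at h3
      rw [edist_dist, Real.dist_eq]
      refine le_trans (ENNReal.ofReal_le_ofReal (abs_le.mpr ⟨?_, ?_⟩))
        (ENNReal.ofReal_toReal_le)
      · linarith
      · linarith
    refine ⟨f, hcont, hlip, fun x => hconv ⟨hfa x, hfb x⟩, ?_, ?_⟩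
    · intro α hα x hx
      refine hfF 0 α ?_ x ?_
      · show α ∈ A0.S
        rw [hA0S]; exact hα
      · exact hA0F α hα hx
    · intro α hα x hx
      refine hGf 0 α x ?_ ?_
      · show α ∈ A0.S
        rw [hA0S]; exact hα
      · exact hA0G α hα hx
end

section
/- (Urysohn's Lemma for topometric spaces) Let X be a normal topometric space, F, G ⊆ X closed sets, and 0 < r < d(F,G). Then there exists a continuous 1-Lipschitz function f : X → [0,r] with f = 0 on F and f = r on G. -/
open scoped ENNReal NNReal
open Set

namespace TopometricUry

open TopometricOn

variable {X : Type*} [TopologicalSpace X] (T : TopometricOn X)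

lemma ptD_le {x a : X} {A : Set X} (ha : a ∈ A) : T.ptD x A ≤ T.d x a := by
  exact iInf₂_le a ha

lemma ptD_self {a : X} {A : Set X} (ha : a ∈ A) : T.ptD a A = 0 :=
  le_antisymm (le_trans (ptD_le T ha) (le_of_eq (T.d_self a))) zero_le

lemma le_setD {A B : Set X} {E : ℝ≥0∞} (h : ∀ x ∈ A, ∀ y ∈ B, E ≤ T.d x y) :
    E ≤ T.setD A B :=
  le_iInf₂ fun x hx => le_iInf₂ fun y hy => h x hx y hy

lemma setD_le {A B : Set X} {x y : X} (hx : x ∈ A) (hy : y ∈ B) :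
    T.setD A B ≤ T.d x y :=
  le_trans (iInf₂_le x hx) (iInf₂_le y hy)

lemma d_le_of_ptD_lt {x y : X} {A : Set X} {E : ℝ≥0∞}
    (h : E < T.ptD x A) (hy : y ∈ A) : E ≤ T.d x y :=
  le_of_lt (lt_of_lt_of_le h (ptD_le T hy))

/-- key thickening estimate -/
lemma setD_le_d_add {C D : Set X} {x y : X} {α β : ℝ≥0∞}
    (hα : α ≠ ∞) (hβ : β ≠ ∞)
    (hx : T.ptD x C ≤ α) (hy : T.ptD y D ≤ β) :
    T.setD C D ≤ T.d x y + α + β := by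
  refine ENNReal.le_of_forall_pos_le_add fun ε hε hfin => ?_
  have hε2 : (0:ℝ≥0∞) < ε / 2 := by
    simp [ENNReal.div_pos_iff, hε.ne']
  have hxC : T.ptD x C < α + ε / 2 := lt_of_le_of_lt hx (by
    simpa using (ENNReal.lt_add_right hα hε2.ne'))
  have hyD : T.ptD y D < β + ε / 2 := lt_of_le_of_lt hy (by
    simpa using (ENNReal.lt_add_right hβ hε2.ne'))
  rw [ptD, iInf_lt_iff] at hxC hyD
  obtain ⟨c, hcC⟩ := hxC
  rw [iInf_lt_iff] at hcC
  obtain ⟨hc, hdc⟩ := hcC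
  obtain ⟨e, heD⟩ := hyD
  rw [iInf_lt_iff] at heD
  obtain ⟨he, hde⟩ := heD
  have h1 : T.setD C D ≤ T.d c e := setD_le T hc he
  have h2 : T.d c e ≤ T.d c x + T.d x y + T.d y e := by
    calc T.d c e ≤ T.d c x + T.d x e := T.d_triangle _ _ _
    _ ≤ T.d c x + (T.d x y + T.d y e) := by
        exact add_le_add le_rfl (T.d_triangle _ _ _)
    _ = _ := by ring
  have h3 : T.d c x = T.d x c := T.d_symm _ _
  have : T.setD C D ≤ (α + ε/2) + T.d x y + (β + ε/2) := by
    refine h1.trans (h2.trans ?_)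
    rw [h3]
    exact add_le_add (add_le_add hdc.le le_rfl) hde.le
  calc T.setD C D ≤ (α + ε/2) + T.d x y + (β + ε/2) := this
    _ = (T.d x y + α + β) + (ε/2 + ε/2) := by ring
    _ = (T.d x y + α + β) + ε := by rw [ENNReal.add_halves]
    _ ≤ _ := le_rfl

/-- from the above: pointwise lower bound on d between thickenings. -/
lemma le_d_of_thick {C D : Set X} {x y : X} {α β E : ℝ≥0∞}
    (hα : α ≠ ∞) (hβ : β ≠ ∞)
    (hx : T.ptD x C ≤ α) (hy : T.ptD y D ≤ β)
    (h : E + (α + β) ≤ T.setD C D) : E ≤ T.d x y := by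
  have h1 : T.setD C D ≤ T.d x y + (α + β) := by
    have := setD_le_d_add T hα hβ hx hy
    calc T.setD C D ≤ T.d x y + α + β := this
      _ = T.d x y + (α + β) := by ring
  have h2 : E + (α + β) ≤ T.d x y + (α + β) := h.trans h1
  exact (ENNReal.add_le_add_iff_right (ENNReal.add_ne_top.2 ⟨hα, hβ⟩)).1 h2

/-! ### An enumeration of a dense set of rationals in (0,1) -/

noncomputable def qe (n : ℕ) : ℝ :=
  ((n.unpair.1 : ℝ) + 1) / ((n.unpair.1 : ℝ) + (n.unpair.2 : ℝ) + 2)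

lemma qe_pos (n : ℕ) : 0 < qe n := by
  apply div_pos <;> positivity

lemma qe_lt_one (n : ℕ) : qe n < 1 := by
  rw [qe, div_lt_one (by positivity)]
  have : (0:ℝ) ≤ (n.unpair.2 : ℝ) := by positivity
  linarith

lemma qe_dense {a b : ℝ} (ha : 0 ≤ a) (hab : a < b) (hb : b ≤ 1) :
    ∃ n, a < qe n ∧ qe n < b := by
  obtain ⟨ξ, hξ1, hξ2⟩ := exists_rat_btwn hab
  have hξpos : 0 < ξ := by
    have : (0:ℝ) < (ξ:ℝ) := lt_of_le_of_lt ha hξ1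
    exact_mod_cast this
  have hξlt : ξ < 1 := by
    have : (ξ:ℝ) < 1 := lt_of_lt_of_le hξ2 hb
    exact_mod_cast this
  set p : ℕ := ξ.num.toNat with hp
  have hpnum : (p : ℤ) = ξ.num := Int.toNat_of_nonneg (le_of_lt (Rat.num_pos.2 hξpos))
  have hppos : 0 < p := by
    have := Rat.num_pos.2 hξpos
    omega
  have hpden : p < ξ.den := by
    have h1 : ξ.num < (ξ.den : ℤ) := by
      have hd : (0:ℝ) < (ξ.den : ℝ) := by positivity
      have hcast : ((ξ.num : ℝ)) / (ξ.den : ℝ) < 1 := by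
        rw [← Rat.cast_def]; exact_mod_cast hξlt
      have := (div_lt_one hd).1 hcast
      exact_mod_cast this
    omega
  refine ⟨Nat.pair (p - 1) (ξ.den - p - 1), ?_, ?_⟩ <;>
  · have hun : (Nat.pair (p - 1) (ξ.den - p - 1)).unpair = (p - 1, ξ.den - p - 1) :=
      Nat.unpair_pair _ _
    have hqe : qe (Nat.pair (p - 1) (ξ.den - p - 1)) = (ξ : ℝ) := by
      rw [qe, hun]
      have h1 : ((p - 1 : ℕ) : ℝ) = (p : ℝ) - 1 := by
        have : (1:ℕ) ≤ p := hppos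
        push_cast [Nat.cast_sub this]
        ring
      have h2 : ((ξ.den - p - 1 : ℕ) : ℝ) = (ξ.den : ℝ) - p - 1 := by
        have : p + 1 ≤ ξ.den := hpden
        have h3 : (1:ℕ) ≤ ξ.den - p := by omega
        push_cast [Nat.cast_sub (le_of_lt hpden), Nat.cast_sub h3]
        ring
      rw [h1, h2]
      have hden : ((ξ.den : ℝ)) ≠ 0 := by positivity
      have hnum : ((p:ℝ)) = (ξ.num : ℝ) := by exact_mod_cast hpnum
      rw [Rat.cast_def]
      rw [← hnum]
      congr 1 <;> ring
    rw [hqe]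
    first | exact hξ1 | exact hξ2

/-! ### The inductive step -/

section Main

variable {X : Type*} [TopologicalSpace X] {T : TopometricOn X}

/-- closed thickening -/
noncomputable def thick (T : TopometricOn X) (C : Set X) (α : ℝ) : Set X :=
  {x | T.ptD x C ≤ ENNReal.ofReal α}

lemma isClosed_thick (hT : T.IsNormal) {C : Set X} (hC : IsClosed C) {α : ℝ}
    (hα : 0 < α) : IsClosed (thick T C α) :=
  hT.2 C hC _ (by simp [hα])

lemma subset_thick {C : Set X} {α : ℝ} : C ⊆ thick T C α := by
  intro x hx
  simp only [thick, mem_setOf_eq, ptD_self T hx]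
  exact zero_le

lemma piece_bound {C D : Set X} {x y : X} {qa qb qn ga gb c s' : ℝ}
    (hc : 0 < c) (hcs : c ≤ s')
    (hga : 0 < ga) (hgb : 0 < gb)
    (h1 : ga ≤ qn - qa) (h2 : gb ≤ qb - qn)
    (hinv : ENNReal.ofReal ((qb - qa) * s') ≤ T.setD C D)
    (hx : x ∈ thick T C ((qn - qa) * c)) (hy : y ∈ thick T D ((qb - qn) * c)) :
    ENNReal.ofReal ((ga + gb) * (s' - c)) ≤ T.d x y := by
  have hqa : 0 < qn - qa := lt_of_lt_of_le hga h1
  have hqb : 0 < qb - qn := lt_of_lt_of_le hgb h2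
  refine le_d_of_thick T (α := ENNReal.ofReal ((qn - qa) * c))
    (β := ENNReal.ofReal ((qb - qn) * c)) ENNReal.ofReal_ne_top ENNReal.ofReal_ne_top hx hy ?_
  have key : (ga + gb) * (s' - c) + ((qn - qa) * c + (qb - qn) * c) ≤ (qb - qa) * s' := by
    nlinarith [mul_le_mul_of_nonneg_right (add_le_add h1 h2) (sub_nonneg.2 hcs)]
  calc ENNReal.ofReal ((ga + gb) * (s' - c)) +
        (ENNReal.ofReal ((qn - qa) * c) + ENNReal.ofReal ((qb - qn) * c))
      = ENNReal.ofReal ((ga + gb) * (s' - c) + ((qn - qa) * c + (qb - qn) * c)) := by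
        have hA0 : 0 ≤ (ga + gb) * (s' - c) := mul_nonneg (by linarith) (by linarith)
        have hB0 : 0 ≤ (qn - qa) * c := mul_nonneg (by linarith) hc.le
        have hC0 : 0 ≤ (qb - qn) * c := mul_nonneg (by linarith) hc.le
        rw [← ENNReal.ofReal_add hB0 hC0, ← ENNReal.ofReal_add hA0 (add_nonneg hB0 hC0)]
    _ ≤ ENNReal.ofReal ((qb - qa) * s') := ENNReal.ofReal_le_ofReal key
    _ ≤ T.setD C D := hinv

lemma step (hT : T.IsNormal) (F G : Set X) (hF : IsClosed F) (hG : IsClosed G)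
    (σ : ℕ → ℝ) (hσpos : ∀ i, 0 < σ i) (hσanti : StrictAnti σ)
    (hbase : ENNReal.ofReal (σ 0) ≤ T.setD F G)
    (n : ℕ) (u : ∀ i, i < n → Set X)
    (hopen : ∀ i h, IsOpen (u i h))
    (hsepF : ∀ i h, ENNReal.ofReal (qe i * σ (i+1)) ≤ T.setD F (u i h)ᶜ)
    (hsepG : ∀ i h, ENNReal.ofReal ((1 - qe i) * σ (i+1)) ≤ T.setD (closure (u i h)) G)
    (hsepMid : ∀ i j hi hj, qe i < qe j →
      ENNReal.ofReal ((qe j - qe i) * σ (max i j + 1)) ≤ T.setD (closure (u i hi)) ((u j hj)ᶜ)) :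
    ∃ W : Set X, IsOpen W ∧
      (ENNReal.ofReal (qe n * σ (n+1)) ≤ T.setD F Wᶜ) ∧
      (ENNReal.ofReal ((1 - qe n) * σ (n+1)) ≤ T.setD (closure W) G) ∧
      (∀ i h, qe i < qe n →
        ENNReal.ofReal ((qe n - qe i) * σ (n+1)) ≤ T.setD (closure (u i h)) Wᶜ) ∧
      (∀ i h, qe n < qe i →
        ENNReal.ofReal ((qe i - qe n) * σ (n+1)) ≤ T.setD (closure W) ((u i h)ᶜ)) := by
  classical
  set c := σ (n+1) with hc
  have hcpos : 0 < c := hσpos _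
  have hq0 : 0 < qe n := qe_pos n
  have hq1 : qe n < 1 := qe_lt_one n
  -- the two closed "piece unions"
  set A : Set X := thick T F (qe n * c) ∪
    ⋃ i : Fin n, (if qe i.1 < qe n then thick T (closure (u i.1 i.2)) ((qe n - qe i.1) * c)
      else ∅) with hA
  set B : Set X := thick T G ((1 - qe n) * c) ∪
    ⋃ i : Fin n, (if qe n < qe i.1 then thick T ((u i.1 i.2)ᶜ) ((qe i.1 - qe n) * c)
      else ∅) with hB
  have hAclosed : IsClosed A := by
    refine IsClosed.union (isClosed_thick hT hF (by positivity)) ?_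
    refine isClosed_iUnion_of_finite fun i => ?_
    split_ifs with h
    · exact isClosed_thick hT isClosed_closure (by nlinarith)
    · exact isClosed_empty
  have hBclosed : IsClosed B := by
    refine IsClosed.union (isClosed_thick hT hG (by nlinarith)) ?_
    refine isClosed_iUnion_of_finite fun i => ?_
    split_ifs with h
    · exact isClosed_thick hT (isClosed_compl_iff.2 (hopen _ _)) (by nlinarith)
    · exact isClosed_empty
  -- the uniform gap bounds
  set s₁ : Finset ℝ := insert (qe n)
    (((Finset.range n).filter (fun i => qe i < qe n)).image (fun i => qe n - qe i)) with hs₁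
  set s₂ : Finset ℝ := insert (1 - qe n)
    (((Finset.range n).filter (fun i => qe n < qe i)).image (fun i => qe i - qe n)) with hs₂
  have hs₁ne : s₁.Nonempty := ⟨_, Finset.mem_insert_self _ _⟩
  have hs₂ne : s₂.Nonempty := ⟨_, Finset.mem_insert_self _ _⟩
  set γ₁ := s₁.min' hs₁ne with hγ₁
  set γ₂ := s₂.min' hs₂ne with hγ₂
  have hγ₁pos : 0 < γ₁ := by
    have := s₁.min'_mem hs₁ne
    rw [← hγ₁] at this
    rcases Finset.mem_insert.1 this with h | h
    · rw [h]; exact hq0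
    · obtain ⟨i, hi, heq⟩ := Finset.mem_image.1 h
      rw [← heq]
      have := (Finset.mem_filter.1 hi).2
      linarith
  have hγ₂pos : 0 < γ₂ := by
    have := s₂.min'_mem hs₂ne
    rw [← hγ₂] at this
    rcases Finset.mem_insert.1 this with h | h
    · rw [h]; linarith
    · obtain ⟨i, hi, heq⟩ := Finset.mem_image.1 h
      rw [← heq]
      have := (Finset.mem_filter.1 hi).2
      linarith
  have hsn : c < σ n := hσanti (Nat.lt_succ_self n)
  -- positivity of setD A B
  have hsep : (0:ℝ≥0∞) < T.setD A B := by
    have hE : (0:ℝ≥0∞) < ENNReal.ofReal ((γ₁ + γ₂) * (σ n - c)) := by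
      rw [ENNReal.ofReal_pos]; nlinarith
    refine lt_of_lt_of_le hE (le_setD T ?_)
    rintro x hx y hy
    -- decompose membership in A
    have hxA : (x ∈ thick T F (qe n * c)) ∨
        ∃ i : Fin n, qe i.1 < qe n ∧ x ∈ thick T (closure (u i.1 i.2)) ((qe n - qe i.1) * c) := by
      rcases hx with h | h
      · exact Or.inl h
      · obtain ⟨s, ⟨i, rfl⟩, hxs⟩ := h
        by_cases hqi : qe i.1 < qe n
        · exact Or.inr ⟨i, hqi, by simpa [hqi] using hxs⟩
        · simp [hqi] at hxs
    have hyB : (y ∈ thick T G ((1 - qe n) * c)) ∨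
        ∃ i : Fin n, qe n < qe i.1 ∧ y ∈ thick T ((u i.1 i.2)ᶜ) ((qe i.1 - qe n) * c) := by
      rcases hy with h | h
      · exact Or.inl h
      · obtain ⟨s, ⟨i, rfl⟩, hys⟩ := h
        by_cases hqi : qe n < qe i.1
        · exact Or.inr ⟨i, hqi, by simpa [hqi] using hys⟩
        · simp [hqi] at hys
    have hγ₁F : γ₁ ≤ qe n := Finset.min'_le _ _ (Finset.mem_insert_self _ _)
    have hγ₂G : γ₂ ≤ 1 - qe n := Finset.min'_le _ _ (Finset.mem_insert_self _ _)
    have hγ₁i : ∀ i : Fin n, qe i.1 < qe n → γ₁ ≤ qe n - qe i.1 := fun i hi =>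
      Finset.min'_le _ _ (Finset.mem_insert_of_mem (Finset.mem_image.2
        ⟨i.1, Finset.mem_filter.2 ⟨Finset.mem_range.2 i.2, hi⟩, rfl⟩))
    have hγ₂i : ∀ i : Fin n, qe n < qe i.1 → γ₂ ≤ qe i.1 - qe n := fun i hi =>
      Finset.min'_le _ _ (Finset.mem_insert_of_mem (Finset.mem_image.2
        ⟨i.1, Finset.mem_filter.2 ⟨Finset.mem_range.2 i.2, hi⟩, rfl⟩))
    have hσn : ∀ m, m ≤ n → σ n ≤ σ m := fun m hm => hσanti.antitone hm
    rcases hxA with hxF | ⟨i, hqi, hxi⟩ <;> rcases hyB with hyG | ⟨j, hqj, hyj⟩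
    · -- F vs G
      refine piece_bound (qa := 0) (qb := 1) (qn := qe n) hcpos hsn.le hγ₁pos hγ₂pos
        (by linarith) (by linarith) ?_ (by simpa using hxF) (by simpa using hyG)
      calc ENNReal.ofReal ((1 - 0) * σ n) ≤ ENNReal.ofReal (σ 0) := by
            apply ENNReal.ofReal_le_ofReal
            have := hσn 0 (Nat.zero_le n); linarith
        _ ≤ _ := hbase
    · -- F vs (u j)ᶜ
      refine piece_bound (qa := 0) (qb := qe j.1) (qn := qe n) hcpos hsn.le hγ₁pos hγ₂pos
        (by linarith) (by linarith [hγ₂i j hqj]) ?_ (by simpa using hxF) (by simpa using hyj)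
      calc ENNReal.ofReal ((qe j.1 - 0) * σ n)
          ≤ ENNReal.ofReal (qe j.1 * σ (j.1+1)) := by
            apply ENNReal.ofReal_le_ofReal
            have := hσn (j.1+1) j.2
            have := qe_pos j.1
            nlinarith
        _ ≤ _ := hsepF j.1 j.2
    · -- closure (u i) vs G
      refine piece_bound (qa := qe i.1) (qb := 1) (qn := qe n) hcpos hsn.le hγ₁pos hγ₂pos
        (hγ₁i i hqi) (by linarith) ?_ hxi (by simpa using hyG)
      calc ENNReal.ofReal ((1 - qe i.1) * σ n)
          ≤ ENNReal.ofReal ((1 - qe i.1) * σ (i.1+1)) := by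
            apply ENNReal.ofReal_le_ofReal
            have := hσn (i.1+1) i.2
            have := qe_lt_one i.1
            nlinarith
        _ ≤ _ := hsepG i.1 i.2
    · -- closure (u i) vs (u j)ᶜ
      have hij : qe i.1 < qe j.1 := lt_trans hqi hqj
      refine piece_bound (qa := qe i.1) (qb := qe j.1) (qn := qe n) hcpos hsn.le hγ₁pos hγ₂pos
        (hγ₁i i hqi) (hγ₂i j hqj) ?_ hxi hyj
      calc ENNReal.ofReal ((qe j.1 - qe i.1) * σ n)
          ≤ ENNReal.ofReal ((qe j.1 - qe i.1) * σ (max i.1 j.1 + 1)) := by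
            apply ENNReal.ofReal_le_ofReal
            have h1 : max i.1 j.1 + 1 ≤ n := by
              have := i.2; have := j.2; omega
            have := hσn _ h1
            nlinarith
        _ ≤ _ := hsepMid i.1 j.1 i.2 j.2 hij
  -- apply normality
  obtain ⟨W, V, hWopen, hVopen, hAW, hBV, hWV⟩ := hT.1 A B hAclosed hBclosed hsep
  have hclW : closure W ⊆ Vᶜ := by
    rw [← (isClosed_compl_iff.2 hVopen).closure_eq]
    exact closure_mono (subset_compl_iff_disjoint_right.2 hWV)
  have hclWB : ∀ x ∈ closure W, x ∉ B := fun x hx hxB => hclW hx (hBV hxB)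
  refine ⟨W, hWopen, ?_, ?_, ?_, ?_⟩
  · -- sepF
    refine le_setD T fun x hx y hy => ?_
    have hyA : y ∉ A := fun hyA => hy (hAW hyA)
    have hyF : ¬ (T.ptD y F ≤ ENNReal.ofReal (qe n * c)) := fun h => hyA (Or.inl h)
    rw [T.d_symm]
    exact d_le_of_ptD_lt T (not_le.1 hyF) hx
  · -- sepG
    refine le_setD T fun x hx y hy => ?_
    have hxB : x ∉ B := hclWB x hx
    have hxG : ¬ (T.ptD x G ≤ ENNReal.ofReal ((1 - qe n) * c)) := fun h => hxB (Or.inl h)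
    exact d_le_of_ptD_lt T (not_le.1 hxG) hy
  · -- sepMid lower i
    intro i h hqi
    refine le_setD T fun x hx y hy => ?_
    have hyA : y ∉ A := fun hyA => hy (hAW hyA)
    have hyi : ¬ (T.ptD y (closure (u i h)) ≤ ENNReal.ofReal ((qe n - qe i) * c)) := by
      intro hcon
      refine hyA (Or.inr ?_)
      refine mem_iUnion.2 ⟨⟨i, h⟩, ?_⟩
      rw [if_pos hqi]
      exact hcon
    rw [T.d_symm]
    exact d_le_of_ptD_lt T (not_le.1 hyi) hx
  · -- sepMid upper i
    intro i h hqi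
    refine le_setD T fun x hx y hy => ?_
    have hxB : x ∉ B := hclWB x hx
    have hxi : ¬ (T.ptD x ((u i h)ᶜ) ≤ ENNReal.ofReal ((qe i - qe n) * c)) := by
      intro hcon
      refine hxB (Or.inr ?_)
      refine mem_iUnion.2 ⟨⟨i, h⟩, ?_⟩
      rw [if_pos hqi]
      exact hcon
    exact d_le_of_ptD_lt T (not_le.1 hxi) hy

end Main

section Chain

variable {X : Type*} [TopologicalSpace X] (T : TopometricOn X)

structure BD (F G : Set X) (σ : ℕ → ℝ) (n : ℕ) where
  u : ∀ i, i < n → Set X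
  hopen : ∀ i h, IsOpen (u i h)
  hsepF : ∀ i h, ENNReal.ofReal (qe i * σ (i+1)) ≤ T.setD F (u i h)ᶜ
  hsepG : ∀ i h, ENNReal.ofReal ((1 - qe i) * σ (i+1)) ≤ T.setD (closure (u i h)) G
  hsepMid : ∀ i j hi hj, qe i < qe j →
    ENNReal.ofReal ((qe j - qe i) * σ (max i j + 1)) ≤ T.setD (closure (u i hi)) ((u j hj)ᶜ)

variable {T}
variable (hT : T.IsNormal) (F G : Set X) (hF : IsClosed F) (hG : IsClosed G)
    (σ : ℕ → ℝ) (hσpos : ∀ i, 0 < σ i) (hσanti : StrictAnti σ)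
    (hbase : ENNReal.ofReal (σ 0) ≤ T.setD F G)

noncomputable def stepSet {n : ℕ} (bd : BD T F G σ n) : Set X :=
  Classical.choose (step hT F G hF hG σ hσpos hσanti hbase n bd.u bd.hopen
    bd.hsepF bd.hsepG bd.hsepMid)

lemma stepSet_spec {n : ℕ} (bd : BD T F G σ n) :
    IsOpen (stepSet hT F G hF hG σ hσpos hσanti hbase bd) ∧
      (ENNReal.ofReal (qe n * σ (n+1)) ≤
        T.setD F (stepSet hT F G hF hG σ hσpos hσanti hbase bd)ᶜ) ∧
      (ENNReal.ofReal ((1 - qe n) * σ (n+1)) ≤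
        T.setD (closure (stepSet hT F G hF hG σ hσpos hσanti hbase bd)) G) ∧
      (∀ i h, qe i < qe n → ENNReal.ofReal ((qe n - qe i) * σ (n+1)) ≤
        T.setD (closure (bd.u i h)) (stepSet hT F G hF hG σ hσpos hσanti hbase bd)ᶜ) ∧
      (∀ i h, qe n < qe i → ENNReal.ofReal ((qe i - qe n) * σ (n+1)) ≤
        T.setD (closure (stepSet hT F G hF hG σ hσpos hσanti hbase bd)) ((bd.u i h)ᶜ)) :=
  Classical.choose_spec (step hT F G hF hG σ hσpos hσanti hbase n bd.u bd.hopen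
    bd.hsepF bd.hsepG bd.hsepMid)

noncomputable def extend {n : ℕ} (bd : BD T F G σ n) : BD T F G σ (n+1) where
  u := fun i _ => if h' : i < n then bd.u i h' else stepSet hT F G hF hG σ hσpos hσanti hbase bd
  hopen := by
    intro i h
    by_cases h' : i < n
    · simpa [h'] using bd.hopen i h'
    · simpa [h'] using (stepSet_spec hT F G hF hG σ hσpos hσanti hbase bd).1
  hsepF := by
    intro i h
    by_cases h' : i < n
    · simpa [h'] using bd.hsepF i h'
    · have hi : i = n := by omega
      subst hi
      simpa [h'] using (stepSet_spec hT F G hF hG σ hσpos hσanti hbase bd).2.1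
  hsepG := by
    intro i h
    by_cases h' : i < n
    · simpa [h'] using bd.hsepG i h'
    · have hi : i = n := by omega
      subst hi
      simpa [h'] using (stepSet_spec hT F G hF hG σ hσpos hσanti hbase bd).2.2.1
  hsepMid := by
    intro i j hi hj hij
    by_cases hi' : i < n <;> by_cases hj' : j < n
    · simpa [hi', hj'] using bd.hsepMid i j hi' hj' hij
    · have hj'' : j = n := by omega
      subst hj''
      have hmax : max i j = j := by omega
      rw [hmax]
      simpa [hi', hj'] using
        (stepSet_spec hT F G hF hG σ hσpos hσanti hbase bd).2.2.2.1 i hi' hij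
    · have hi'' : i = n := by omega
      subst hi''
      have hmax : max i j = i := by omega
      rw [hmax]
      simpa [hi', hj'] using
        (stepSet_spec hT F G hF hG σ hσpos hσanti hbase bd).2.2.2.2 j hj' hij
    · have hi'' : i = n := by omega
      have hj'' : j = n := by omega
      rw [hi'', hj''] at hij
      exact absurd hij (lt_irrefl _)

noncomputable def chain : ∀ n : ℕ, BD T F G σ n
  | 0 => ⟨fun i h => absurd h (Nat.not_lt_zero i),
      fun i h => absurd h (Nat.not_lt_zero i),
      fun i h => absurd h (Nat.not_lt_zero i),
      fun i h => absurd h (Nat.not_lt_zero i),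
      fun i j hi _ _ => absurd hi (Nat.not_lt_zero i)⟩
  | (n+1) => extend hT F G hF hG σ hσpos hσanti hbase (chain n)

noncomputable def Useq (n : ℕ) : Set X :=
  (chain hT F G hF hG σ hσpos hσanti hbase (n+1)).u n (Nat.lt_succ_self n)

lemma chain_u_eq : ∀ n i (h : i < n),
    (chain hT F G hF hG σ hσpos hσanti hbase n).u i h =
      Useq hT F G hF hG σ hσpos hσanti hbase i := by
  intro n
  induction n with
  | zero => intro i h; exact absurd h (Nat.not_lt_zero i)
  | succ n IH =>
    intro i h
    by_cases h' : i < n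
    · have : (chain hT F G hF hG σ hσpos hσanti hbase (n+1)).u i h =
          (chain hT F G hF hG σ hσpos hσanti hbase n).u i h' := by
        show (extend hT F G hF hG σ hσpos hσanti hbase _).u i h = _
        simp [extend, h']
      rw [this, IH]
    · have hi : i = n := by omega
      subst hi
      rfl

lemma Useq_isOpen (n : ℕ) : IsOpen (Useq hT F G hF hG σ hσpos hσanti hbase n) :=
  (chain hT F G hF hG σ hσpos hσanti hbase (n+1)).hopen n (Nat.lt_succ_self n)

lemma Useq_sepF (n : ℕ) : ENNReal.ofReal (qe n * σ (n+1)) ≤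
    T.setD F (Useq hT F G hF hG σ hσpos hσanti hbase n)ᶜ :=
  (chain hT F G hF hG σ hσpos hσanti hbase (n+1)).hsepF n (Nat.lt_succ_self n)

lemma Useq_sepG (n : ℕ) : ENNReal.ofReal ((1 - qe n) * σ (n+1)) ≤
    T.setD (closure (Useq hT F G hF hG σ hσpos hσanti hbase n)) G :=
  (chain hT F G hF hG σ hσpos hσanti hbase (n+1)).hsepG n (Nat.lt_succ_self n)

lemma Useq_sepMid (i j : ℕ) (hij : qe i < qe j) :
    ENNReal.ofReal ((qe j - qe i) * σ (max i j + 1)) ≤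
      T.setD (closure (Useq hT F G hF hG σ hσpos hσanti hbase i))
        ((Useq hT F G hF hG σ hσpos hσanti hbase j)ᶜ) := by
  have hi : i < max i j + 1 := by omega
  have hj : j < max i j + 1 := by omega
  have := (chain hT F G hF hG σ hσpos hσanti hbase (max i j + 1)).hsepMid i j hi hj hij
  rwa [chain_u_eq, chain_u_eq] at this

end Chain

end TopometricUry

open TopometricUry

/-- Urysohn's Lemma for normal topometric spaces. -/
theorem topometric_urysohn {X : Type*} [TopologicalSpace X]
    (T : TopometricOn X) (hT : T.IsNormal) (F G : Set X)
    (hF : IsClosed F) (hG : IsClosed G) (r : ℝ) (hr : 0 < r)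
    (hrd : ENNReal.ofReal r < T.setD F G) :
    ∃ f : X → ℝ, Continuous f ∧ (∀ x y, edist (f x) (f y) ≤ T.d x y) ∧
      (∀ x, f x ∈ Set.Icc (0 : ℝ) r) ∧ (∀ x ∈ F, f x = 0) ∧ (∀ x ∈ G, f x = r) := by
  classical
  obtain ⟨sHi, hsHi0, h1, h2⟩ := ENNReal.lt_iff_exists_real_btwn.1 hrd
  have hrsHi : r < sHi := by
    by_contra hcon
    push_neg at hcon
    exact absurd (ENNReal.ofReal_le_ofReal hcon) (not_le.2 h1)
  obtain ⟨sLo, hsLo1, hsLo2⟩ := exists_between hrsHi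
  set σ : ℕ → ℝ := fun i => sLo + (sHi - sLo) / (i + 1) with hσ
  have hσpos : ∀ i, 0 < σ i := by
    intro i
    have : (0:ℝ) < (i:ℝ) + 1 := by positivity
    have : 0 < (sHi - sLo) / (i + 1) := by
      apply div_pos <;> linarith
    simp only [hσ]
    linarith
  have hσanti : StrictAnti σ := by
    intro i j hij
    simp only [hσ]
    have hij' : (i:ℝ) + 1 < (j:ℝ) + 1 := by
      have : (i:ℝ) < j := by exact_mod_cast hij
      linarith
    have := div_lt_div_of_pos_left (by linarith : (0:ℝ) < sHi - sLo)
      (by positivity : (0:ℝ) < (i:ℝ) + 1) hij'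
    linarith
  have hσ0 : σ 0 = sHi := by simp [hσ]
  have hbase : ENNReal.ofReal (σ 0) ≤ T.setD F G := by
    rw [hσ0]; exact h2.le
  have hσlo : ∀ i, sLo ≤ σ i := by
    intro i
    have : (0:ℝ) < (i:ℝ) + 1 := by positivity
    have : 0 ≤ (sHi - sLo) / (i + 1) := by
      apply div_nonneg <;> linarith
    simp only [hσ]
    linarith
  set U : ℕ → Set X := Useq hT F G hF hG σ hσpos hσanti hbase with hU
  have hUopen : ∀ n, IsOpen (U n) := Useq_isOpen hT F G hF hG σ hσpos hσanti hbase
  have hUsepF := Useq_sepF hT F G hF hG σ hσpos hσanti hbase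
  have hUsepG := Useq_sepG hT F G hF hG σ hσpos hσanti hbase
  have hUsepMid := Useq_sepMid hT F G hF hG σ hσpos hσanti hbase
  -- derived facts
  have hFsub : ∀ n, F ⊆ U n := by
    intro n x hx
    by_contra hxU
    have h0 : T.setD F (U n)ᶜ ≤ T.d x x := setD_le T hx hxU
    rw [T.d_self] at h0
    have hpos : 0 < ENNReal.ofReal (qe n * σ (n+1)) := by
      rw [ENNReal.ofReal_pos]
      exact mul_pos (qe_pos n) (hσpos _)
    exact absurd (le_trans (hUsepF n) h0) (by simpa using hpos.ne')
  have hGdis : ∀ n, ∀ x ∈ G, x ∉ U n := by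
    intro n x hxG hxU
    have h0 : T.setD (closure (U n)) G ≤ T.d x x := setD_le T (subset_closure hxU) hxG
    rw [T.d_self] at h0
    have hpos : 0 < ENNReal.ofReal ((1 - qe n) * σ (n+1)) := by
      rw [ENNReal.ofReal_pos]
      have := qe_lt_one n
      have := hσpos (n+1)
      nlinarith
    exact absurd (le_trans (hUsepG n) h0) (by simpa using hpos.ne')
  have hmono : ∀ i j, qe i < qe j → closure (U i) ⊆ U j := by
    intro i j hij x hx
    by_contra hxU
    have h0 : T.setD (closure (U i)) ((U j)ᶜ) ≤ T.d x x := setD_le T hx hxU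
    rw [T.d_self] at h0
    have hpos : 0 < ENNReal.ofReal ((qe j - qe i) * σ (max i j + 1)) := by
      rw [ENNReal.ofReal_pos]
      have := hσpos (max i j + 1)
      nlinarith
    exact absurd (le_trans (hUsepMid i j hij) h0) (by simpa using hpos.ne')
  have hLip : ∀ i j (x y : X), qe i < qe j → x ∈ closure (U i) → y ∉ U j →
      ENNReal.ofReal ((qe j - qe i) * sLo) ≤ T.d x y := by
    intro i j x y hij hx hy
    refine le_trans ?_ (le_trans (hUsepMid i j hij) (setD_le T hx hy))
    apply ENNReal.ofReal_le_ofReal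
    exact mul_le_mul_of_nonneg_left (hσlo _) (by linarith)
  -- the function
  set S : X → Set ℝ := fun x => insert 1 {t | ∃ n, x ∈ U n ∧ qe n = t} with hS
  have hSne : ∀ x, (S x).Nonempty := fun x => ⟨1, mem_insert _ _⟩
  have hSbdd : ∀ x, BddBelow (S x) := by
    intro x
    refine ⟨0, ?_⟩
    rintro t ht
    rcases mem_insert_iff.1 ht with rfl | ht'
    · norm_num
    · obtain ⟨n, _, rfl⟩ := ht'
      exact (qe_pos n).le
  set g : X → ℝ := fun x => sInf (S x) with hg
  have hg0 : ∀ x, 0 ≤ g x := by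
    intro x
    refine le_csInf (hSne x) ?_
    rintro t ht
    rcases mem_insert_iff.1 ht with rfl | ht'
    · norm_num
    · obtain ⟨n, _, rfl⟩ := ht'
      exact (qe_pos n).le
  have hg1 : ∀ x, g x ≤ 1 := fun x => csInf_le (hSbdd x) (mem_insert _ _)
  have hgU : ∀ x n, x ∈ U n → g x ≤ qe n := fun x n h =>
    csInf_le (hSbdd x) (mem_insert_of_mem _ ⟨n, h, rfl⟩)
  have hUg : ∀ x n, qe n < g x → x ∉ U n := fun x n h hx =>
    absurd (hgU x n hx) (not_le.2 h)
  have hclg : ∀ n x, x ∉ closure (U n) → qe n ≤ g x := by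
    intro n x hx
    refine le_csInf (hSne x) ?_
    rintro t ht
    rcases mem_insert_iff.1 ht with rfl | ht'
    · exact (qe_lt_one n).le
    · obtain ⟨m, hm, rfl⟩ := ht'
      by_contra hlt
      push_neg at hlt
      exact hx (subset_closure (hmono m n hlt (subset_closure hm)))
  -- continuity
  have hgopen1 : ∀ a : ℝ, IsOpen {x | g x < a} := by
    intro a
    by_cases ha : a ≤ 1
    · have : {x | g x < a} = ⋃ n, (if qe n < a then U n else ∅) := by
        ext x
        simp only [mem_setOf_eq, mem_iUnion]
        constructor
        · intro hx
          obtain ⟨t, ht, hta⟩ := (csInf_lt_iff (hSbdd x) (hSne x)).1 hx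
          rcases mem_insert_iff.1 ht with rfl | ht'
          · linarith
          · obtain ⟨n, hn, rfl⟩ := ht'
            exact ⟨n, by simp [hta, hn]⟩
        · rintro ⟨n, hn⟩
          by_cases hq : qe n < a
          · rw [if_pos hq] at hn
            exact lt_of_le_of_lt (hgU x n hn) hq
          · simp [hq] at hn
      rw [this]
      refine isOpen_iUnion fun n => ?_
      split_ifs
      exacts [hUopen n, isOpen_empty]
    · have : {x | g x < a} = univ := by
        ext x
        simp only [mem_setOf_eq, mem_univ, iff_true]
        have := hg1 x
        linarith
      rw [this]
      exact isOpen_univ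
  have hgopen2 : ∀ a : ℝ, IsOpen {x | a < g x} := by
    intro a
    by_cases ha0 : 0 ≤ a
    · by_cases ha1 : a < 1
      · have : {x | a < g x} = ⋃ n, (if a < qe n then (closure (U n))ᶜ else ∅) := by
          ext x
          simp only [mem_setOf_eq, mem_iUnion]
          constructor
          · intro hx
            have hb : a < min (g x) 1 := lt_min hx ha1
            have hb1 : min (g x) 1 ≤ 1 := min_le_right _ _
            obtain ⟨n₁, hn₁a, hn₁b⟩ := qe_dense ha0 hb hb1
            obtain ⟨n₂, hn₂a, hn₂b⟩ := qe_dense (qe_pos n₁).le hn₁b hb1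
            have hxn₂ : x ∉ U n₂ := hUg x n₂ (lt_of_lt_of_le hn₂b (min_le_left _ _))
            have hxn₁ : x ∉ closure (U n₁) := fun hc => hxn₂ (hmono n₁ n₂ hn₂a hc)
            exact ⟨n₁, by simp [hn₁a, hxn₁]⟩
          · rintro ⟨n, hn⟩
            by_cases hq : a < qe n
            · rw [if_pos hq] at hn
              exact lt_of_lt_of_le hq (hclg n x hn)
            · simp [hq] at hn
        rw [this]
        refine isOpen_iUnion fun n => ?_
        split_ifs
        exacts [(isClosed_closure).isOpen_compl, isOpen_empty]
      · have : {x | a < g x} = ∅ := by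
          ext x
          simp only [mem_setOf_eq, mem_empty_iff_false, iff_false, not_lt]
          have := hg1 x
          linarith
        rw [this]
        exact isOpen_empty
    · have : {x | a < g x} = univ := by
        ext x
        simp only [mem_setOf_eq, mem_univ, iff_true]
        have := hg0 x
        linarith
      rw [this]
      exact isOpen_univ
  have hgcont : Continuous g := by
    rw [continuous_iff_lower_upperSemicontinuous]
    exact ⟨lowerSemicontinuous_iff_isOpen_preimage.2 fun a => hgopen2 a,
           upperSemicontinuous_iff_isOpen_preimage.2 fun a => hgopen1 a⟩
  refine ⟨fun x => r * g x, continuous_const.mul hgcont, ?_, ?_, ?_, ?_⟩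
  · -- Lipschitz
    have aux : ∀ x y : X, g x ≤ g y → ENNReal.ofReal (r * (g y - g x)) ≤ T.d x y := by
      intro x y hxy
      refine ENNReal.le_of_forall_pos_le_add fun ε hε _ => ?_
      set K : ℝ := 3 * r + 2 * sLo + 1 with hK
      have hKpos : 0 < K := by nlinarith
      set η : ℝ := (ε : ℝ) / K with hη
      have hεR : (0:ℝ) < (ε : ℝ) := hε
      have hηpos : 0 < η := by positivity
      have hKη : K * η = (ε : ℝ) := by
        rw [hη]; field_simp
      by_cases hcase : g y - g x ≤ 3 * η
      · calc ENNReal.ofReal (r * (g y - g x)) ≤ ENNReal.ofReal ((ε : ℝ)) := by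
              apply ENNReal.ofReal_le_ofReal
              nlinarith
          _ = (ε : ℝ≥0∞) := ENNReal.ofReal_coe_nnreal
          _ ≤ T.d x y + ε := le_add_self
      · push_neg at hcase
        obtain ⟨t, ht, hta⟩ := (csInf_lt_iff (hSbdd x) (hSne x)).1
          (show g x < g x + η by linarith)
        rcases mem_insert_iff.1 ht with rfl | ht'
        · exfalso
          have := hg1 y
          linarith
        obtain ⟨n₁, hn₁U, rfl⟩ := ht'
        have hgy1 : g y ≤ 1 := hg1 y
        have hbd : max (qe n₁) (g y - η) < g y := by
          rw [max_lt_iff]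
          constructor <;> linarith
        obtain ⟨n₂, hn₂a, hn₂b⟩ := qe_dense (le_max_of_le_left (qe_pos n₁).le) hbd hgy1
        have hn₁n₂ : qe n₁ < qe n₂ := lt_of_le_of_lt (le_max_left _ _) hn₂a
        have hyU : y ∉ U n₂ := hUg y n₂ hn₂b
        have hd := hLip n₁ n₂ x y hn₁n₂ (subset_closure hn₁U) hyU
        have harith : r * (g y - g x) ≤ (qe n₂ - qe n₁) * sLo + 2 * sLo * η := by
          have h1 : g y - η < qe n₂ := lt_of_le_of_lt (le_max_right (qe n₁) (g y - η)) hn₂a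
          have h2 : qe n₁ < g x + η := hta
          have h3 : 0 ≤ g y - g x := by linarith
          nlinarith
        calc ENNReal.ofReal (r * (g y - g x))
            ≤ ENNReal.ofReal ((qe n₂ - qe n₁) * sLo + 2 * sLo * η) :=
              ENNReal.ofReal_le_ofReal harith
          _ = ENNReal.ofReal ((qe n₂ - qe n₁) * sLo) + ENNReal.ofReal (2 * sLo * η) := by
              rw [← ENNReal.ofReal_add (mul_nonneg (by linarith) (by linarith))
                (mul_nonneg (mul_nonneg (by norm_num) (by linarith)) hηpos.le)]
          _ ≤ T.d x y + ε := by
              refine add_le_add hd ?_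
              calc ENNReal.ofReal (2 * sLo * η) ≤ ENNReal.ofReal (K * η) := by
                    apply ENNReal.ofReal_le_ofReal
                    nlinarith [hηpos.le, hr.le, hsLo1]
                _ = (ε : ℝ≥0∞) := by rw [hKη]; exact ENNReal.ofReal_coe_nnreal
    intro x y
    rcases le_total (g x) (g y) with h | h
    · have hax := aux x y h
      have heq : edist (r * g x) (r * g y) = ENNReal.ofReal (r * (g y - g x)) := by
        rw [edist_dist, Real.dist_eq]
        congr 1
        rw [abs_sub_comm,
          abs_of_nonneg (by nlinarith [mul_le_mul_of_nonneg_left h hr.le] :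
            (0:ℝ) ≤ r * g y - r * g x)]
        ring
      rw [heq]
      exact hax
    · have hax := aux y x h
      have heq : edist (r * g x) (r * g y) = ENNReal.ofReal (r * (g x - g y)) := by
        rw [edist_dist, Real.dist_eq]
        congr 1
        rw [abs_of_nonneg (by nlinarith [mul_le_mul_of_nonneg_left h hr.le] :
            (0:ℝ) ≤ r * g x - r * g y)]
        ring
      rw [heq, T.d_symm]
      exact hax
  · -- range
    intro x
    constructor
    · exact mul_nonneg hr.le (hg0 x)
    · show r * g x ≤ r
      have := mul_le_mul_of_nonneg_left (hg1 x) hr.le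
      linarith
  · -- on F
    intro x hx
    have hgx : g x ≤ 0 := by
      by_contra hcon
      push_neg at hcon
      have hb : (0:ℝ) < min (g x) 1 := lt_min hcon one_pos
      obtain ⟨n, hna, hnb⟩ := qe_dense le_rfl hb (min_le_right _ _)
      have := hgU x n (hFsub n hx)
      have := lt_of_lt_of_le hnb (min_le_left _ _)
      linarith
    have hgx0 : g x = 0 := le_antisymm hgx (hg0 x)
    show r * g x = 0
    rw [hgx0, mul_zero]
  · -- on G
    intro x hx
    have hgx : 1 ≤ g x := by
      refine le_csInf (hSne x) ?_
      rintro t ht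
      rcases mem_insert_iff.1 ht with rfl | ht'
      · exact le_rfl
      · obtain ⟨n, hn, rfl⟩ := ht'
        exact absurd hn (hGdis n x hx)
    have hgx1 : g x = 1 := le_antisymm (hg1 x) hgx
    show r * g x = r
    rw [hgx1, mul_one]
end

section
/- (Tietze's Extension Theorem for topometric spaces) Let X be a normal topometric space, Y ⊆ X a closed subset, c < c' positive reals, and f : Y → [0,1] a continuous c-Lipschitz function (with respect to the induced topology and metric on Y). Then f extends to a continuous c'-Lipschitz function g : X → [0,1]. -/
open scoped ENNReal NNReal
open Set

namespace TTZAux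

variable {X : Type*} [TopologicalSpace X]

/-! ### Basic helpers for `ptD` and `setD` -/

lemma ptD_le_d (T : TopometricOn X) {x x' : X} {S : Set X} (h : x' ∈ S) :
    T.ptD x S ≤ T.d x x' := iInf₂_le x' h

lemma ptD_zero_of_mem (T : TopometricOn X) {x : X} {S : Set X} (h : x ∈ S) :
    T.ptD x S = 0 :=
  le_antisymm ((ptD_le_d T h).trans_eq (T.d_self x)) zero_le

lemma exists_near (T : TopometricOn X) {x : X} {S : Set X} {r : ℝ≥0∞}
    (h : T.ptD x S < r) : ∃ z ∈ S, T.d x z < r := by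
  simpa [TopometricOn.ptD, iInf_lt_iff] using h

lemma le_setD (T : TopometricOn X) {A B : Set X} {σ : ℝ≥0∞}
    (h : ∀ a ∈ A, ∀ b ∈ B, σ ≤ T.d a b) : σ ≤ T.setD A B :=
  le_iInf₂ fun a ha => le_iInf₂ fun b hb => h a ha b hb

lemma setD_empty_left (T : TopometricOn X) (B : Set X) : T.setD ∅ B = ⊤ := by
  simp [TopometricOn.setD]

lemma setD_union_left (T : TopometricOn X) (A A' B : Set X) :
    T.setD (A ∪ A') B = T.setD A B ⊓ T.setD A' B := by
  show (⨅ x ∈ A ∪ A', ⨅ y ∈ B, T.d x y) = _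
  refine le_antisymm (le_inf (iInf_le_iInf_of_subset Set.subset_union_left)
    (iInf_le_iInf_of_subset Set.subset_union_right)) (le_iInf₂ fun x hx => ?_)
  rcases hx with h | h
  · exact inf_le_left.trans (iInf₂_le x h)
  · exact inf_le_right.trans (iInf₂_le x h)

lemma setD_comm (T : TopometricOn X) (A B : Set X) : T.setD A B = T.setD B A := by
  refine le_antisymm ?_ ?_ <;>
    exact le_iInf₂ fun b hb => le_iInf₂ fun a ha =>
      (T.d_symm b a ▸ iInf₂_le_of_le a ha (iInf₂_le b hb))

lemma setD_pos_biUnion_left (T : TopometricOn X) {ι : Type*} {s : Set ι}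
    (hs : s.Finite) {A : ι → Set X} {B : Set X}
    (h : ∀ i ∈ s, 0 < T.setD (A i) B) : 0 < T.setD (⋃ i ∈ s, A i) B := by
  refine Set.Finite.induction_on
    (motive := fun s _ => (∀ i ∈ s, 0 < T.setD (A i) B) → 0 < T.setD (⋃ i ∈ s, A i) B) s hs
    (fun _ => by simp [setD_empty_left]) ?_ h
  intro a s _ _ ih h'
  rw [Set.biUnion_insert, setD_union_left]
  exact lt_min (h' a (Set.mem_insert a s)) (ih fun i hi => h' i (Set.mem_insert_of_mem _ hi))

lemma setD_pos_biUnion_right (T : TopometricOn X) {ι : Type*} {s : Set ι}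
    (hs : s.Finite) {A : Set X} {B : ι → Set X}
    (h : ∀ i ∈ s, 0 < T.setD A (B i)) : 0 < T.setD A (⋃ i ∈ s, B i) := by
  rw [setD_comm]
  exact setD_pos_biUnion_left T hs fun i hi => (setD_comm T A (B i)) ▸ h i hi

lemma setD_pos_union_left (T : TopometricOn X) {A A' B : Set X}
    (h : 0 < T.setD A B) (h' : 0 < T.setD A' B) : 0 < T.setD (A ∪ A') B := by
  rw [setD_union_left]; exact lt_min h h'

lemma setD_pos_union_right (T : TopometricOn X) {A B B' : Set X}
    (h : 0 < T.setD A B) (h' : 0 < T.setD A B') : 0 < T.setD A (B ∪ B') := by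
  rw [setD_comm]
  exact setD_pos_union_left T ((setD_comm T A B) ▸ h) ((setD_comm T A B') ▸ h')

/-- The key separation estimate: if every point of `P` is at distance at least
`ρ1 + ρ2 + σ` from every point of `Q`, then the `ρ1`-thickening of `P` and the
`ρ2`-thickening of `Q` are at distance at least `σ`. -/
lemma pair_sep (T : TopometricOn X) {P Q : Set X} {ρ1 ρ2 σ : ℝ≥0∞}
    (hρ1 : ρ1 ≠ ⊤) (hρ2 : ρ2 ≠ ⊤)
    (h : ∀ z ∈ P, ∀ w ∈ Q, ρ1 + ρ2 + σ ≤ T.d z w)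
    {a b : X} (ha : T.ptD a P ≤ ρ1) (hb : T.ptD b Q ≤ ρ2) : σ ≤ T.d a b := by
  refine ENNReal.le_of_forall_pos_le_add fun ε hε _ => ?_
  have hε2 : ((ε : ℝ≥0∞) / 2) ≠ 0 := by
    simp [ENNReal.div_eq_zero_iff, (by exact_mod_cast hε.ne' : (ε : ℝ≥0∞) ≠ 0)]
  obtain ⟨z, hz, hdz⟩ := exists_near T (lt_of_le_of_lt ha (ENNReal.lt_add_right hρ1 hε2))
  obtain ⟨w, hw, hdw⟩ := exists_near T (lt_of_le_of_lt hb (ENNReal.lt_add_right hρ2 hε2))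
  have tri : T.d z w ≤ T.d a z + T.d a b + T.d b w := by
    calc T.d z w ≤ T.d z a + T.d a w := T.d_triangle _ _ _
    _ ≤ T.d z a + (T.d a b + T.d b w) := by
        exact add_le_add le_rfl (T.d_triangle _ _ _)
    _ = T.d a z + T.d a b + T.d b w := by rw [T.d_symm z a, add_assoc]
  have key : ρ1 + ρ2 + σ ≤ (ρ1 + ρ2) + (T.d a b + ε) := by
    calc ρ1 + ρ2 + σ ≤ T.d z w := h z hz w hw
    _ ≤ T.d a z + T.d a b + T.d b w := tri
    _ ≤ (ρ1 + ε/2) + T.d a b + (ρ2 + ε/2) := by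
        exact add_le_add (add_le_add hdz.le le_rfl) hdw.le
    _ = (ρ1 + ρ2) + (T.d a b + (ε/2 + ε/2)) := by ring
    _ = (ρ1 + ρ2) + (T.d a b + ε) := by rw [ENNReal.add_halves]
  have hs : (ρ1 + ρ2) ≠ ⊤ := ENNReal.add_ne_top.2 ⟨hρ1, hρ2⟩
  exact (ENNReal.add_le_add_iff_left hs).1 key

/-! ### Constants and arithmetic -/

noncomputable def c1 (c c' : ℝ≥0) : ℝ := (c : ℝ) + ((c' : ℝ) - c) / 3
noncomputable def c0 (c c' : ℝ≥0) : ℝ := (c : ℝ) + 2 * ((c' : ℝ) - c) / 3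
noncomputable def kap (c c' : ℝ≥0) : ℝ := (1 / c1 c c' - 1 / c0 c c') / 2

section Params

variable {c c' : ℝ≥0}

lemma rc_pos (hc : 0 < c) : (0:ℝ) < c := by exact_mod_cast hc

lemma rcc' (hcc' : c < c') : (c:ℝ) < (c':ℝ) := by exact_mod_cast hcc'

lemma c_lt_c1 (hcc' : c < c') : (c:ℝ) < c1 c c' := by
  have := rcc' hcc'; unfold c1; linarith

lemma c1_lt_c0 (hcc' : c < c') : c1 c c' < c0 c c' := by
  have := rcc' hcc'; unfold c1 c0; linarith

lemma c0_lt_c' (hcc' : c < c') : c0 c c' < (c':ℝ) := by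
  have := rcc' hcc'; unfold c0; linarith

lemma c1_pos (hc : 0 < c) (hcc' : c < c') : (0:ℝ) < c1 c c' := (rc_pos hc).trans (c_lt_c1 hcc')

lemma c0_pos (hc : 0 < c) (hcc' : c < c') : (0:ℝ) < c0 c c' := (c1_pos hc hcc').trans (c1_lt_c0 hcc')

lemma kap_pos (hc : 0 < c) (hcc' : c < c') : 0 < kap c c' := by
  have h1 := c1_pos hc hcc'
  have h2 := c1_lt_c0 hcc'
  have : 1 / c0 c c' < 1 / c1 c c' := by
    apply one_div_lt_one_div_of_lt h1 h2
  unfold kap; linarith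

lemma inv_sub_eq : 1 / c1 c c' - 1 / c0 c c' = 2 * kap c c' := by unfold kap; ring

noncomputable def mu (c c' : ℝ≥0) (γ : ℝ) : ℝ≥0∞ :=
  ENNReal.ofReal (γ / c0 c c' + kap c c' * γ ^ 2)

noncomputable def be (c c' : ℝ≥0) (γ : ℝ) : ℝ≥0∞ :=
  ENNReal.ofReal (γ / c1 c c')

lemma mu_ne_top : mu c c' γ ≠ ⊤ := ENNReal.ofReal_ne_top

lemma be_ne_top : be c c' γ ≠ ⊤ := ENNReal.ofReal_ne_top

lemma mu_pos (hc : 0 < c) (hcc' : c < c') {γ : ℝ} (hγ : 0 < γ) : 0 < mu c c' γ := by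
  have h0 := c0_pos hc hcc'
  have hk := kap_pos hc hcc'
  apply ENNReal.ofReal_pos.2
  have : 0 < γ / c0 c c' := div_pos hγ h0
  nlinarith

lemma be_pos (hc : 0 < c) (hcc' : c < c') {γ : ℝ} (hγ : 0 < γ) : 0 < be c c' γ :=
  ENNReal.ofReal_pos.2 (div_pos hγ (c1_pos hc hcc'))

lemma ofReal_le_mu (hc : 0 < c) (hcc' : c < c') {γ : ℝ} : ENNReal.ofReal (γ / c0 c c') ≤ mu c c' γ := by
  have hk := kap_pos hc hcc'
  apply ENNReal.ofReal_le_ofReal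
  nlinarith [sq_nonneg γ]

lemma case1 (hc : 0 < c) (hcc' : c < c') {u v : ℝ} (hu : 0 ≤ u) (hv : 0 ≤ v) :
    mu c c' u + mu c c' v + ENNReal.ofReal (2 * kap c c' * u * v) = mu c c' (u + v) := by
  have h0 := c0_pos hc hcc'
  have hk := kap_pos hc hcc'
  have e1 : 0 ≤ u / c0 c c' + kap c c' * u ^ 2 := by positivity
  have e2 : 0 ≤ v / c0 c c' + kap c c' * v ^ 2 := by positivity
  rw [mu, mu, mu, ← ENNReal.ofReal_add e1 e2, ← ENNReal.ofReal_add (by positivity) (by positivity)]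
  congr 1
  field_simp
  ring

lemma case2 (hc : 0 < c) (hcc' : c < c') {u v : ℝ} (hu : 0 < u) (hu1 : u ≤ 1) (hv : 0 ≤ v) :
    mu c c' u + be c c' v + ENNReal.ofReal (kap c c' * u) ≤ be c c' (u + v) := by
  have h0 := c0_pos hc hcc'
  have h1 := c1_pos hc hcc'
  have hk := kap_pos hc hcc'
  have his := inv_sub_eq (c := c) (c' := c')
  rw [mu, be, be, ← ENNReal.ofReal_add (by positivity) (by positivity),
    ← ENNReal.ofReal_add (by positivity) (by positivity)]
  apply ENNReal.ofReal_le_ofReal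
  have key : u / c1 c c' - u / c0 c c' = 2 * kap c c' * u := by
    have : (1 / c1 c c' - 1 / c0 c c') * (c1 c c' * c0 c c') = c0 c c' - c1 c c' := by
      field_simp
    rw [his] at this
    rw [div_sub_div _ _ (ne_of_gt h1) (ne_of_gt h0),
      show u * c0 c c' - c1 c c' * u = u * (c0 c c' - c1 c c') by ring,
      div_eq_iff (by positivity), ← this]
    ring
  have expand : (u + v) / c1 c c' = u / c1 c c' + v / c1 c c' := by ring
  rw [expand]
  nlinarith [sq_nonneg u, mul_pos hk hu]

lemma case3 (hc : 0 < c) (hcc' : c < c') {u v : ℝ} (hv : 0 < v) (hv1 : v ≤ 1) (hu : 0 ≤ u) :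
    be c c' u + mu c c' v + ENNReal.ofReal (kap c c' * v) ≤ be c c' (u + v) := by
  have h := case2 (c := c) (c' := c') hc hcc' hv hv1 hu
  calc be c c' u + mu c c' v + ENNReal.ofReal (kap c c' * v)
      = mu c c' v + be c c' u + ENNReal.ofReal (kap c c' * v) := by ring
    _ ≤ be c c' (v + u) := h
    _ = be c c' (u + v) := by rw [add_comm]

lemma case4 (hc : 0 < c) (hcc' : c < c') {u v : ℝ} (hu : 0 ≤ u) (hv : 0 ≤ v) :
    be c c' u + be c c' v + ENNReal.ofReal ((u + v) * (1 / (c:ℝ) - 1 / c1 c c')) ≤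
      ENNReal.ofReal ((u + v) / (c:ℝ)) := by
  have h1 := c1_pos hc hcc'
  have hcp := rc_pos hc
  have hcl := c_lt_c1 hcc'
  have hinv : 0 ≤ 1 / (c:ℝ) - 1 / c1 c c' := by
    have := one_div_lt_one_div_of_lt hcp hcl
    linarith
  rw [be, be, ← ENNReal.ofReal_add (by positivity) (by positivity),
    ← ENNReal.ofReal_add (by positivity) (by positivity)]
  apply ENNReal.ofReal_le_ofReal
  have : u / c1 c c' + v / c1 c c' = (u + v) / c1 c c' := by ring
  rw [this]
  have : (u + v) / c1 c c' + (u + v) * (1 / (c:ℝ) - 1 / c1 c c') = (u + v) / (c:ℝ) := by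
    field_simp
    ring
  linarith [this.le]

end Params

/-! ### Ghost sets, enumeration, invariants -/

lemma le_ptD (T : TopometricOn X) {S : Set X} {x : X} {σ : ℝ≥0∞}
    (h : ∀ z ∈ S, σ ≤ T.d x z) : σ ≤ T.ptD x S :=
  le_iInf₂ h

def thick (T : TopometricOn X) (F : Set X) (r : ℝ≥0∞) : Set X := {x | T.ptD x F ≤ r}

lemma thick_closed {T : TopometricOn X} (hT : T.IsNormal) {F : Set X} (hF : IsClosed F)
    {r : ℝ≥0∞} (hr : 0 < r) : IsClosed (thick T F r) := hT.2 F hF r hr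

lemma subset_thick (T : TopometricOn X) (F : Set X) (r : ℝ≥0∞) : F ⊆ thick T F r :=
  fun x hx => by simp [thick, ptD_zero_of_mem T hx]

lemma not_thick {T : TopometricOn X} {F : Set X} {r : ℝ≥0∞} {x : X}
    (h : x ∉ thick T F r) : r < T.ptD x F := not_le.1 h

noncomputable def glv (N : ℕ) (k : ℕ) : ℝ := (k : ℝ) / N

def grid (N : ℕ) : Set ℕ := Set.Icc 1 (N - 1)

lemma grid_finite (N : ℕ) : (grid N).Finite := Set.finite_Icc _ _

def Fgh (Y : Set X) (f : Y → ℝ) (N k : ℕ) : Set X :=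
  Subtype.val '' {y : Y | f y ≤ glv N k}

def Ggh (Y : Set X) (f : Y → ℝ) (N k : ℕ) : Set X :=
  Subtype.val '' {y : Y | glv N k ≤ f y}

lemma Fgh_closed {Y : Set X} (hY : IsClosed Y) {f : Y → ℝ} (hfc : Continuous f) (N k : ℕ) :
    IsClosed (Fgh Y f N k) :=
  (hY.isClosedEmbedding_subtypeVal).isClosedMap _ (isClosed_Iic.preimage hfc)

lemma Ggh_closed {Y : Set X} (hY : IsClosed Y) {f : Y → ℝ} (hfc : Continuous f) (N k : ℕ) :
    IsClosed (Ggh Y f N k) :=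
  (hY.isClosedEmbedding_subtypeVal).isClosedMap _ (isClosed_Ici.preimage hfc)

lemma ghost_far {T : TopometricOn X} {Y : Set X} {c : ℝ≥0} (hc : 0 < c) {f : Y → ℝ}
    (hfl : ∀ a b : Y, edist (f a) (f b) ≤ (c : ℝ≥0∞) * T.d a b) {N k k' : ℕ}
    (h : glv N k < glv N k') :
    ∀ z ∈ Fgh Y f N k, ∀ w ∈ Ggh Y f N k',
      ENNReal.ofReal ((glv N k' - glv N k) / (c : ℝ)) ≤ T.d z w := by
  rintro _ ⟨a, ha, rfl⟩ _ ⟨b, hb, rfl⟩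
  have ha' : f a ≤ glv N k := ha
  have hb' : glv N k' ≤ f b := hb
  have h1 : ENNReal.ofReal (glv N k' - glv N k) ≤ edist (f a) (f b) := by
    rw [edist_dist, Real.dist_eq]
    apply ENNReal.ofReal_le_ofReal
    rw [abs_sub_comm]
    calc glv N k' - glv N k ≤ f b - f a := by linarith
    _ ≤ |f b - f a| := le_abs_self _
  have h2 : ENNReal.ofReal (glv N k' - glv N k) ≤ (c : ℝ≥0∞) * T.d a b :=
    h1.trans (hfl a b)
  rw [ENNReal.ofReal_div_of_pos (rc_pos hc), ENNReal.ofReal_coe_nnreal]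
  exact ENNReal.div_le_of_le_mul' h2

noncomputable def qe (n : ℕ) : ℚ := (Denumerable.eqv ℚ).symm n

lemma qe_surj (q : ℚ) : ∃ n, qe n = q :=
  ⟨Denumerable.eqv ℚ q, Equiv.symm_apply_apply _ _⟩

noncomputable def lvl (n : ℕ) : ℝ := (qe n : ℝ)

def validL (n : ℕ) : Prop := 0 < lvl n ∧ lvl n < 1

/-- The full invariant for the recursive construction. -/
def OK (T : TopometricOn X) (Y : Set X) (c c' : ℝ≥0) (f : Y → ℝ) (N : ℕ)
    (O C : ℕ → Set X) (n : ℕ) : Prop :=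
  (∀ i < n, ¬ validL i → O i = ∅ ∧ C i = ∅) ∧
  (∀ i < n, validL i → IsOpen (O i) ∧ IsClosed (C i) ∧ O i ⊆ C i) ∧
  (∀ i < n, ∀ j < n, validL i → validL j → lvl i < lvl j →
    ∀ w, w ∉ O j → mu c c' (lvl j - lvl i) ≤ T.ptD w (C i)) ∧
  (∀ i < n, validL i → ∀ k ∈ grid N, lvl i < glv N k →
    ∀ z ∈ C i, be c c' (glv N k - lvl i) ≤ T.ptD z (Ggh Y f N k)) ∧
  (∀ i < n, validL i → ∀ k ∈ grid N, glv N k < lvl i →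
    ∀ w, w ∉ O i → be c c' (lvl i - glv N k) ≤ T.ptD w (Fgh Y f N k))

lemma step {T : TopometricOn X} (hT : T.IsNormal) {Y : Set X} (hY : IsClosed Y)
    {c c' : ℝ≥0} (hc : 0 < c) (hcc' : c < c') {f : Y → ℝ} (hfc : Continuous f)
    (hfl : ∀ a b : Y, edist (f a) (f b) ≤ (c : ℝ≥0∞) * T.d a b) (N : ℕ)
    (n : ℕ) (O C : ℕ → Set X) (h : OK T Y c c' f N O C n) :
    ∃ V W : Set X,
      OK T Y c c' f N (Function.update O n V) (Function.update C n W) (n + 1) := by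
  obtain ⟨h1, h2, h3, h4, h5⟩ := h
  have lt_or_eq : ∀ {i : ℕ}, i < n + 1 → i < n ∨ i = n := by
    intro i hi; omega
  by_cases hv : validL n
  swap
  · -- invalid level: use empty sets
    refine ⟨∅, ∅, ?_, ?_, ?_, ?_, ?_⟩
    · intro i hi hvi
      rcases lt_or_eq hi with hi' | rfl
      · rw [Function.update_of_ne (Nat.ne_of_lt hi'), Function.update_of_ne (Nat.ne_of_lt hi')]
        exact h1 i hi' hvi
      · rw [Function.update_self, Function.update_self]; exact ⟨rfl, rfl⟩
    · intro i hi hvi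
      rcases lt_or_eq hi with hi' | rfl
      · rw [Function.update_of_ne (Nat.ne_of_lt hi'), Function.update_of_ne (Nat.ne_of_lt hi')]
        exact h2 i hi' hvi
      · exact absurd hvi hv
    · intro i hi j hj hvi hvj hij
      have hi' : i < n := by rcases lt_or_eq hi with h' | h'; exacts [h', absurd (h' ▸ hvi) hv]
      have hj' : j < n := by rcases lt_or_eq hj with h' | h'; exacts [h', absurd (h' ▸ hvj) hv]
      rw [Function.update_of_ne (Nat.ne_of_lt hj'), Function.update_of_ne (Nat.ne_of_lt hi')]
      exact h3 i hi' j hj' hvi hvj hij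
    · intro i hi hvi k hk hik
      have hi' : i < n := by rcases lt_or_eq hi with h' | h'; exacts [h', absurd (h' ▸ hvi) hv]
      rw [Function.update_of_ne (Nat.ne_of_lt hi')]
      exact h4 i hi' hvi k hk hik
    · intro i hi hvi k hk hik
      have hi' : i < n := by rcases lt_or_eq hi with h' | h'; exacts [h', absurd (h' ▸ hvi) hv]
      rw [Function.update_of_ne (Nat.ne_of_lt hi')]
      exact h5 i hi' hvi k hk hik
  · -- valid level
    obtain ⟨hq0, hq1⟩ := hv
    classical
    set J1 : Set ℕ := {j | j < n ∧ validL j ∧ lvl j < lvl n} with hJ1def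
    set J2 : Set ℕ := {j | j < n ∧ validL j ∧ lvl n < lvl j} with hJ2def
    set K1 : Set ℕ := {k | k ∈ grid N ∧ glv N k < lvl n} with hK1def
    set K2 : Set ℕ := {k | k ∈ grid N ∧ lvl n < glv N k} with hK2def
    have hJ1fin : J1.Finite := (Set.finite_Iio n).subset fun j hj => hj.1
    have hJ2fin : J2.Finite := (Set.finite_Iio n).subset fun j hj => hj.1
    have hK1fin : K1.Finite := (grid_finite N).subset fun k hk => hk.1
    have hK2fin : K2.Finite := (grid_finite N).subset fun k hk => hk.1
    set A1 : Set X := ⋃ j ∈ J1, thick T (C j) (mu c c' (lvl n - lvl j)) with hA1def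
    set A2 : Set X := ⋃ k ∈ K1, thick T (Fgh Y f N k) (be c c' (lvl n - glv N k)) with hA2def
    set E1 : Set X := ⋃ j ∈ J2, thick T ((O j)ᶜ) (mu c c' (lvl j - lvl n)) with hE1def
    set E2 : Set X := ⋃ k ∈ K2, thick T (Ggh Y f N k) (be c c' (glv N k - lvl n)) with hE2def
    have hA1closed : IsClosed A1 :=
      Set.Finite.isClosed_biUnion hJ1fin fun j hj =>
        thick_closed hT (h2 j hj.1 hj.2.1).2.1 (mu_pos hc hcc' (by linarith [hj.2.2]))
    have hA2closed : IsClosed A2 :=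
      Set.Finite.isClosed_biUnion hK1fin fun k hk =>
        thick_closed hT (Fgh_closed hY hfc N k) (be_pos hc hcc' (by linarith [hk.2]))
    have hE1closed : IsClosed E1 :=
      Set.Finite.isClosed_biUnion hJ2fin fun j hj =>
        thick_closed hT (isClosed_compl_iff.2 (h2 j hj.1 hj.2.1).1)
          (mu_pos hc hcc' (by linarith [hj.2.2]))
    have hE2closed : IsClosed E2 :=
      Set.Finite.isClosed_biUnion hK2fin fun k hk =>
        thick_closed hT (Ggh_closed hY hfc N k) (be_pos hc hcc' (by linarith [hk.2]))
    -- pairwise distance positivity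
    have pos11 : ∀ j ∈ J1, ∀ j' ∈ J2, 0 < T.setD (thick T (C j) (mu c c' (lvl n - lvl j)))
        (thick T ((O j')ᶜ) (mu c c' (lvl j' - lvl n))) := by
      intro j hj j' hj'
      obtain ⟨hjn, hjv, hjq⟩ := hj
      obtain ⟨hj'n, hj'v, hj'q⟩ := hj'
      have hσ : (0:ℝ≥0∞) < ENNReal.ofReal (2 * kap c c' * (lvl n - lvl j) * (lvl j' - lvl n)) :=
        ENNReal.ofReal_pos.2 (by
          nlinarith [mul_pos (mul_pos (kap_pos hc hcc') (sub_pos.2 hjq)) (sub_pos.2 hj'q)])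
      refine lt_of_lt_of_le hσ (le_setD T fun a ha b hb => ?_)
      refine pair_sep T mu_ne_top mu_ne_top ?_ ha hb
      intro z hz w hw
      have base : mu c c' (lvl j' - lvl j) ≤ T.ptD w (C j) :=
        h3 j hjn j' hj'n hjv hj'v (by linarith) w hw
      calc mu c c' (lvl n - lvl j) + mu c c' (lvl j' - lvl n)
            + ENNReal.ofReal (2 * kap c c' * (lvl n - lvl j) * (lvl j' - lvl n))
          = mu c c' ((lvl n - lvl j) + (lvl j' - lvl n)) :=
            case1 hc hcc' (by linarith) (by linarith)
        _ = mu c c' (lvl j' - lvl j) := by rw [show (lvl n - lvl j) + (lvl j' - lvl n) = lvl j' - lvl j from by ring]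
        _ ≤ T.ptD w (C j) := base
        _ ≤ T.d w z := ptD_le_d T hz
        _ = T.d z w := T.d_symm w z
    have pos12 : ∀ j ∈ J1, ∀ k ∈ K2, 0 < T.setD (thick T (C j) (mu c c' (lvl n - lvl j)))
        (thick T (Ggh Y f N k) (be c c' (glv N k - lvl n))) := by
      intro j hj k hk
      obtain ⟨hjn, hjv, hjq⟩ := hj
      obtain ⟨hkg, hkq⟩ := hk
      have hσ : (0:ℝ≥0∞) < ENNReal.ofReal (kap c c' * (lvl n - lvl j)) :=
        ENNReal.ofReal_pos.2 (by nlinarith [mul_pos (kap_pos hc hcc') (sub_pos.2 hjq)])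
      refine lt_of_lt_of_le hσ (le_setD T fun a ha b hb => ?_)
      refine pair_sep T mu_ne_top be_ne_top ?_ ha hb
      intro z hz w hw
      have base : be c c' (glv N k - lvl j) ≤ T.ptD z (Ggh Y f N k) :=
        h4 j hjn hjv k hkg (by linarith) z hz
      calc mu c c' (lvl n - lvl j) + be c c' (glv N k - lvl n)
            + ENNReal.ofReal (kap c c' * (lvl n - lvl j))
          ≤ be c c' ((lvl n - lvl j) + (glv N k - lvl n)) :=
            case2 hc hcc' (by linarith) (by linarith [hjv.1]) (by linarith)
        _ = be c c' (glv N k - lvl j) := by rw [show (lvl n - lvl j) + (glv N k - lvl n) = glv N k - lvl j from by ring]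
        _ ≤ T.ptD z (Ggh Y f N k) := base
        _ ≤ T.d z w := ptD_le_d T hw
    have pos21 : ∀ k ∈ K1, ∀ j' ∈ J2, 0 < T.setD (thick T (Fgh Y f N k) (be c c' (lvl n - glv N k)))
        (thick T ((O j')ᶜ) (mu c c' (lvl j' - lvl n))) := by
      intro k hk j' hj'
      obtain ⟨hkg, hkq⟩ := hk
      obtain ⟨hj'n, hj'v, hj'q⟩ := hj'
      have hσ : (0:ℝ≥0∞) < ENNReal.ofReal (kap c c' * (lvl j' - lvl n)) :=
        ENNReal.ofReal_pos.2 (by nlinarith [mul_pos (kap_pos hc hcc') (sub_pos.2 hj'q)])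
      refine lt_of_lt_of_le hσ (le_setD T fun a ha b hb => ?_)
      refine pair_sep T be_ne_top mu_ne_top ?_ ha hb
      intro z hz w hw
      have base : be c c' (lvl j' - glv N k) ≤ T.ptD w (Fgh Y f N k) :=
        h5 j' hj'n hj'v k hkg (by linarith) w hw
      calc be c c' (lvl n - glv N k) + mu c c' (lvl j' - lvl n)
            + ENNReal.ofReal (kap c c' * (lvl j' - lvl n))
          ≤ be c c' ((lvl n - glv N k) + (lvl j' - lvl n)) :=
            case3 hc hcc' (by linarith) (by linarith [hj'v.2]) (by linarith)
        _ = be c c' (lvl j' - glv N k) := by rw [show (lvl n - glv N k) + (lvl j' - lvl n) = lvl j' - glv N k from by ring]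
        _ ≤ T.ptD w (Fgh Y f N k) := base
        _ ≤ T.d w z := ptD_le_d T hz
        _ = T.d z w := T.d_symm w z
    have pos22 : ∀ k ∈ K1, ∀ k' ∈ K2, 0 < T.setD (thick T (Fgh Y f N k) (be c c' (lvl n - glv N k)))
        (thick T (Ggh Y f N k') (be c c' (glv N k' - lvl n))) := by
      intro k hk k' hk'
      obtain ⟨hkg, hkq⟩ := hk
      obtain ⟨hk'g, hk'q⟩ := hk'
      have hinv : 1 / c1 c c' < 1 / (c:ℝ) := one_div_lt_one_div_of_lt (rc_pos hc) (c_lt_c1 hcc')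
      have hσ : (0:ℝ≥0∞) < ENNReal.ofReal ((glv N k' - glv N k) * (1 / (c:ℝ) - 1 / c1 c c')) :=
        ENNReal.ofReal_pos.2 (by
          nlinarith [mul_pos (sub_pos.2 (hkq.trans hk'q)) (sub_pos.2 hinv)])
      refine lt_of_lt_of_le hσ (le_setD T fun a ha b hb => ?_)
      refine pair_sep T be_ne_top be_ne_top ?_ ha hb
      intro z hz w hw
      have base := ghost_far hc hfl (show glv N k < glv N k' by linarith) z hz w hw
      calc be c c' (lvl n - glv N k) + be c c' (glv N k' - lvl n)
            + ENNReal.ofReal ((glv N k' - glv N k) * (1 / (c:ℝ) - 1 / c1 c c'))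
          = be c c' (lvl n - glv N k) + be c c' (glv N k' - lvl n)
            + ENNReal.ofReal (((lvl n - glv N k) + (glv N k' - lvl n)) * (1 / (c:ℝ) - 1 / c1 c c')) := by
            rw [show (lvl n - glv N k) + (glv N k' - lvl n) = glv N k' - glv N k from by ring]
        _ ≤ ENNReal.ofReal (((lvl n - glv N k) + (glv N k' - lvl n)) / (c:ℝ)) :=
            case4 hc hcc' (by linarith) (by linarith)
        _ = ENNReal.ofReal ((glv N k' - glv N k) / (c:ℝ)) := by
            rw [show (lvl n - glv N k) + (glv N k' - lvl n) = glv N k' - glv N k from by ring]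
        _ ≤ T.d z w := base
    have hpos : 0 < T.setD (A1 ∪ A2) (E1 ∪ E2) := by
      apply setD_pos_union_left
      · apply setD_pos_union_right
        · exact setD_pos_biUnion_left T hJ1fin fun j hj =>
            setD_pos_biUnion_right T hJ2fin fun j' hj' => pos11 j hj j' hj'
        · exact setD_pos_biUnion_left T hJ1fin fun j hj =>
            setD_pos_biUnion_right T hK2fin fun k hk => pos12 j hj k hk
      · apply setD_pos_union_right
        · exact setD_pos_biUnion_left T hK1fin fun k hk =>
            setD_pos_biUnion_right T hJ2fin fun j' hj' => pos21 k hk j' hj'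
        · exact setD_pos_biUnion_left T hK1fin fun k hk =>
            setD_pos_biUnion_right T hK2fin fun k' hk' => pos22 k hk k' hk'
    obtain ⟨V, W, hVo, hWo, hAV, hEW, hVW⟩ :=
      hT.1 (A1 ∪ A2) (E1 ∪ E2) (hA1closed.union hA2closed) (hE1closed.union hE2closed) hpos
    have hVWc : V ⊆ Wᶜ := fun x hx hw => Set.disjoint_left.1 hVW hx hw
    -- invariant facts for the new pair
    have newSink1 : ∀ j ∈ J1, ∀ w, w ∉ V → mu c c' (lvl n - lvl j) ≤ T.ptD w (C j) := by
      intro j hj w hw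
      have : w ∉ thick T (C j) (mu c c' (lvl n - lvl j)) := fun hmem =>
        hw (hAV (Set.mem_union_left _ (Set.mem_biUnion hj hmem)))
      exact (not_thick this).le
    have newSink2 : ∀ k ∈ K1, ∀ w, w ∉ V → be c c' (lvl n - glv N k) ≤ T.ptD w (Fgh Y f N k) := by
      intro k hk w hw
      have : w ∉ thick T (Fgh Y f N k) (be c c' (lvl n - glv N k)) := fun hmem =>
        hw (hAV (Set.mem_union_right _ (Set.mem_biUnion hk hmem)))
      exact (not_thick this).le
    have newSource1 : ∀ j ∈ J2, ∀ w, w ∉ O j → mu c c' (lvl j - lvl n) ≤ T.ptD w Wᶜ := by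
      intro j hj w hw
      refine le_ptD T fun z hz => ?_
      have : z ∉ thick T ((O j)ᶜ) (mu c c' (lvl j - lvl n)) := fun hmem =>
        hz (hEW (Set.mem_union_left _ (Set.mem_biUnion hj hmem)))
      have h' := (not_thick this).le
      calc mu c c' (lvl j - lvl n) ≤ T.ptD z ((O j)ᶜ) := h'
        _ ≤ T.d z w := ptD_le_d T hw
        _ = T.d w z := T.d_symm z w
    have newSource2 : ∀ k ∈ K2, ∀ z ∈ Wᶜ, be c c' (glv N k - lvl n) ≤ T.ptD z (Ggh Y f N k) := by
      intro k hk z hz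
      have : z ∉ thick T (Ggh Y f N k) (be c c' (glv N k - lvl n)) := fun hmem =>
        hz (hEW (Set.mem_union_right _ (Set.mem_biUnion hk hmem)))
      exact (not_thick this).le
    refine ⟨V, Wᶜ, ?_, ?_, ?_, ?_, ?_⟩
    · intro i hi hvi
      rcases lt_or_eq hi with hi' | rfl
      · rw [Function.update_of_ne (Nat.ne_of_lt hi'), Function.update_of_ne (Nat.ne_of_lt hi')]
        exact h1 i hi' hvi
      · exact absurd ⟨hq0, hq1⟩ hvi
    · intro i hi hvi
      rcases lt_or_eq hi with hi' | rfl
      · rw [Function.update_of_ne (Nat.ne_of_lt hi'), Function.update_of_ne (Nat.ne_of_lt hi')]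
        exact h2 i hi' hvi
      · rw [Function.update_self, Function.update_self]
        exact ⟨hVo, hWo.isClosed_compl, hVWc⟩
    · intro i hi j hj hvi hvj hij
      rcases lt_or_eq hi with hi' | rfl <;> rcases lt_or_eq hj with hj' | hj'
      · rw [Function.update_of_ne (Nat.ne_of_lt hj'), Function.update_of_ne (Nat.ne_of_lt hi')]
        exact h3 i hi' j hj' hvi hvj hij
      · subst hj'
        rw [Function.update_self, Function.update_of_ne (Nat.ne_of_lt hi')]
        exact newSink1 i ⟨hi', hvi, hij⟩
      · rw [Function.update_of_ne (Nat.ne_of_lt hj'), Function.update_self]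
        exact newSource1 j ⟨hj', hvj, hij⟩
      · subst hj'; exact absurd hij (lt_irrefl _)
    · intro i hi hvi k hk hik
      rcases lt_or_eq hi with hi' | rfl
      · rw [Function.update_of_ne (Nat.ne_of_lt hi')]
        exact h4 i hi' hvi k hk hik
      · rw [Function.update_self]
        exact fun z hz => newSource2 k ⟨hk, hik⟩ z hz
    · intro i hi hvi k hk hik
      rcases lt_or_eq hi with hi' | rfl
      · rw [Function.update_of_ne (Nat.ne_of_lt hi')]
        exact h5 i hi' hvi k hk hik
      · rw [Function.update_self]
        exact fun w hw => newSink2 k ⟨hk, hik⟩ w hw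

/-! ### The recursive construction -/

noncomputable def chain {T : TopometricOn X} (hT : T.IsNormal) {Y : Set X} (hY : IsClosed Y)
    {c c' : ℝ≥0} (hc : 0 < c) (hcc' : c < c') {f : Y → ℝ} (hfc : Continuous f)
    (hfl : ∀ a b : Y, edist (f a) (f b) ≤ (c : ℝ≥0∞) * T.d a b) (N : ℕ) :
    ∀ n : ℕ, {p : (ℕ → Set X) × (ℕ → Set X) // OK T Y c c' f N p.1 p.2 n} :=
  fun n => Nat.rec
    ⟨(fun _ => ∅, fun _ => ∅),
      ⟨fun i hi => absurd hi (Nat.not_lt_zero i), fun i hi => absurd hi (Nat.not_lt_zero i),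
       fun i hi => absurd hi (Nat.not_lt_zero i), fun i hi => absurd hi (Nat.not_lt_zero i),
       fun i hi => absurd hi (Nat.not_lt_zero i)⟩⟩
    (fun n prev =>
      let hS := step hT hY hc hcc' hfc hfl N n prev.1.1 prev.1.2 prev.2
      ⟨(Function.update prev.1.1 n hS.choose,
        Function.update prev.1.2 n hS.choose_spec.choose),
        hS.choose_spec.choose_spec⟩) n

lemma chain_agree {T : TopometricOn X} (hT : T.IsNormal) {Y : Set X} (hY : IsClosed Y)
    {c c' : ℝ≥0} (hc : 0 < c) (hcc' : c < c') {f : Y → ℝ} (hfc : Continuous f)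
    (hfl : ∀ a b : Y, edist (f a) (f b) ≤ (c : ℝ≥0∞) * T.d a b) (N : ℕ) (m : ℕ) :
    ∀ n, m < n →
      (chain hT hY hc hcc' hfc hfl N n).1.1 m = (chain hT hY hc hcc' hfc hfl N (m+1)).1.1 m ∧
      (chain hT hY hc hcc' hfc hfl N n).1.2 m = (chain hT hY hc hcc' hfc hfl N (m+1)).1.2 m := by
  intro n
  induction n with
  | zero => omega
  | succ n ih =>
    intro h
    rcases Nat.lt_succ_iff_lt_or_eq.1 h with h' | h'
    · have e1 : (chain hT hY hc hcc' hfc hfl N (n+1)).1.1 m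
          = (chain hT hY hc hcc' hfc hfl N n).1.1 m :=
        Function.update_of_ne (by omega) _ _
      have e2 : (chain hT hY hc hcc' hfc hfl N (n+1)).1.2 m
          = (chain hT hY hc hcc' hfc hfl N n).1.2 m :=
        Function.update_of_ne (by omega) _ _
      rw [e1, e2]
      exact ih h'
    · subst h'
      exact ⟨rfl, rfl⟩

lemma exists_family {T : TopometricOn X} (hT : T.IsNormal) {Y : Set X} (hY : IsClosed Y)
    {c c' : ℝ≥0} (hc : 0 < c) (hcc' : c < c') {f : Y → ℝ} (hfc : Continuous f)
    (hfl : ∀ a b : Y, edist (f a) (f b) ≤ (c : ℝ≥0∞) * T.d a b) (N : ℕ) :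
    ∃ O C : ℕ → Set X, ∀ n, OK T Y c c' f N O C n := by
  classical
  refine ⟨fun m => (chain hT hY hc hcc' hfc hfl N (m+1)).1.1 m,
          fun m => (chain hT hY hc hcc' hfc hfl N (m+1)).1.2 m, fun n => ?_⟩
  obtain ⟨g1, g2, g3, g4, g5⟩ := (chain hT hY hc hcc' hfc hfl N n).2
  have agr := chain_agree hT hY hc hcc' hfc hfl N
  refine ⟨?_, ?_, ?_, ?_, ?_⟩
  · intro i hi hvi
    beta_reduce
    rw [← (agr i n hi).1, ← (agr i n hi).2]
    exact g1 i hi hvi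
  · intro i hi hvi
    beta_reduce
    rw [← (agr i n hi).1, ← (agr i n hi).2]
    exact g2 i hi hvi
  · intro i hi j hj hvi hvj hij w hw
    beta_reduce at hw ⊢
    rw [← (agr i n hi).2]
    rw [← (agr j n hj).1] at hw
    exact g3 i hi j hj hvi hvj hij w hw
  · intro i hi hvi k hk hik z hz
    beta_reduce at hz
    rw [← (agr i n hi).2] at hz
    exact g4 i hi hvi k hk hik z hz
  · intro i hi hvi k hk hik w hw
    beta_reduce at hw
    rw [← (agr i n hi).1] at hw
    exact g5 i hi hvi k hk hik w hw

/-! ### The approximate extension -/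

set_option maxHeartbeats 2000000 in
lemma approx {T : TopometricOn X} (hT : T.IsNormal) {Y : Set X} (hY : IsClosed Y)
    {c c' : ℝ≥0} (hc : 0 < c) (hcc' : c < c') {f : Y → ℝ} (hfc : Continuous f)
    (hfl : ∀ a b : Y, edist (f a) (f b) ≤ (c : ℝ≥0∞) * T.d a b)
    (hf01 : ∀ y, f y ∈ Set.Icc (0 : ℝ) 1) (N : ℕ) (hN : 0 < N) :
    ∃ u : X → ℝ, Continuous u ∧ (∀ x y, edist (u x) (u y) ≤ (c' : ℝ≥0∞) * T.d x y) ∧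
      (∀ x, u x ∈ Set.Icc (0:ℝ) 1) ∧ ∀ y : Y, |u y - f y| ≤ 2 / N := by
  classical
  obtain ⟨O, C, hOK⟩ := exists_family hT hY hc hcc' hfc hfl N
  have hOpen : ∀ i, validL i → IsOpen (O i) :=
    fun i h => ((hOK (i+1)).2.1 i (Nat.lt_succ_self i) h).1
  have hClosed : ∀ i, validL i → IsClosed (C i) :=
    fun i h => ((hOK (i+1)).2.1 i (Nat.lt_succ_self i) h).2.1
  have hOC : ∀ i, validL i → O i ⊆ C i :=
    fun i h => ((hOK (i+1)).2.1 i (Nat.lt_succ_self i) h).2.2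
  have hInv1 : ∀ i j, validL i → validL j → lvl i < lvl j →
      ∀ w, w ∉ O j → mu c c' (lvl j - lvl i) ≤ T.ptD w (C i) :=
    fun i j hi hj hij =>
      (hOK (max i j + 1)).2.2.1 i (by omega) j (by omega) hi hj hij
  have hInv3 : ∀ i, validL i → ∀ k ∈ grid N, lvl i < glv N k →
      ∀ z ∈ C i, be c c' (glv N k - lvl i) ≤ T.ptD z (Ggh Y f N k) :=
    fun i hi => (hOK (i+1)).2.2.2.1 i (Nat.lt_succ_self i) hi
  have hInv4 : ∀ i, validL i → ∀ k ∈ grid N, glv N k < lvl i →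
      ∀ w, w ∉ O i → be c c' (lvl i - glv N k) ≤ T.ptD w (Fgh Y f N k) :=
    fun i hi => (hOK (i+1)).2.2.2.2 i (Nat.lt_succ_self i) hi
  have hsub : ∀ i j, validL i → validL j → lvl i < lvl j → C i ⊆ O j := by
    intro i j hi hj hij z hz
    by_contra hzO
    have h1 := hInv1 i j hi hj hij z hzO
    rw [ptD_zero_of_mem T hz] at h1
    exact (mu_pos hc hcc' (sub_pos.2 hij)).not_ge h1
  set S : X → Set ℝ :=
    fun x => insert (1:ℝ) {r | ∃ m, validL m ∧ x ∈ O m ∧ r = lvl m} with hSdef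
  have hSne : ∀ x, (S x).Nonempty := fun x => ⟨1, Set.mem_insert _ _⟩
  have hlb : ∀ x, ∀ r ∈ S x, (0:ℝ) ≤ r := by
    intro x r hr
    rcases Set.mem_insert_iff.1 hr with rfl | ⟨m, hm, _, rfl⟩
    · norm_num
    · exact hm.1.le
  have hSbdd : ∀ x, BddBelow (S x) := fun x => ⟨0, hlb x⟩
  set u : X → ℝ := fun x => sInf (S x) with hudef
  have hu1 : ∀ x, u x ≤ 1 := fun x => csInf_le (hSbdd x) (Set.mem_insert _ _)
  have hu0 : ∀ x, 0 ≤ u x := fun x => le_csInf (hSne x) (hlb x)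
  have hule : ∀ m x, validL m → x ∈ O m → u x ≤ lvl m :=
    fun m x hm hxm => csInf_le (hSbdd x) (Set.mem_insert_iff.2 (Or.inr ⟨m, hm, hxm, rfl⟩))
  have hugt : ∀ x b, (∀ r ∈ S x, b ≤ r) → b ≤ u x := fun x b h => le_csInf (hSne x) h
  have hc0' : (0:ℝ) < c0 c c' := c0_pos hc hcc'
  -- continuity
  have hcont : Continuous u := by
    rw [continuous_iff_lower_upperSemicontinuous]
    constructor
    · rw [lowerSemicontinuous_iff_isOpen_preimage]
      intro s
      rw [isOpen_iff_forall_mem_open]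
      intro x hx
      simp only [Set.mem_preimage, Set.mem_Ioi] at hx
      by_cases hs : s < 0
      · exact ⟨Set.univ, fun z _ => Set.mem_preimage.2 (Set.mem_Ioi.2 (lt_of_lt_of_le hs (hu0 z))),
          isOpen_univ, trivial⟩
      push_neg at hs
      obtain ⟨b', hb'1, hb'2⟩ := exists_rat_btwn hx
      obtain ⟨b, hb1, hb2⟩ := exists_rat_btwn hb'1
      obtain ⟨nb, hnb⟩ := qe_surj b
      obtain ⟨nb', hnb'⟩ := qe_surj b'
      have hlnb : lvl nb = (b:ℝ) := by rw [lvl, hnb]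
      have hlnb' : lvl nb' = (b':ℝ) := by rw [lvl, hnb']
      have hvnb : validL nb := by
        constructor
        · rw [hlnb]; linarith
        · rw [hlnb]; linarith [hu1 x]
      have hvnb' : validL nb' := by
        constructor
        · rw [hlnb']; linarith
        · rw [hlnb']; linarith [hu1 x]
      have hxO : x ∉ O nb' := by
        intro hmem
        have := hule nb' x hvnb' hmem
        rw [hlnb'] at this
        linarith
      have hxC : x ∉ C nb := fun hmem =>
        hxO (hsub nb nb' hvnb hvnb' (by rw [hlnb, hlnb']; exact hb2) hmem)
      refine ⟨(C nb)ᶜ, ?_, (hClosed nb hvnb).isOpen_compl, hxC⟩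
      intro z hz
      simp only [Set.mem_preimage, Set.mem_Ioi]
      have hbz : (b:ℝ) ≤ u z := by
        apply hugt
        intro r hr
        rcases Set.mem_insert_iff.1 hr with rfl | ⟨m, hm, hzm, rfl⟩
        · linarith [hu1 x]
        · by_contra hltr
          push_neg at hltr
          exact hz (hOC nb hvnb
            (hsub m nb hm hvnb (by rw [hlnb]; exact hltr) (hOC m hm hzm)))
      linarith
    · rw [upperSemicontinuous_iff_isOpen_preimage]
      intro s
      rw [isOpen_iff_forall_mem_open]
      intro x hx
      simp only [Set.mem_preimage, Set.mem_Iio] at hx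
      obtain ⟨r, hr, hrs⟩ := exists_lt_of_csInf_lt (hSne x) hx
      rcases Set.mem_insert_iff.1 hr with rfl | ⟨m, hm, hxm, rfl⟩
      · exact ⟨Set.univ,
          fun z _ => Set.mem_preimage.2 (Set.mem_Iio.2 (lt_of_le_of_lt (hu1 z) hrs)),
          isOpen_univ, trivial⟩
      · exact ⟨O m,
          fun z hz => Set.mem_preimage.2 (Set.mem_Iio.2 (lt_of_le_of_lt (hule m z hm hz) hrs)),
          hOpen m hm, hxm⟩
  -- one-sided Lipschitz bound
  have key : ∀ x y : X, T.d x y ≠ ⊤ → T.d x y ≠ 0 →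
      u y ≤ u x + c0 c c' * (T.d x y).toReal := by
    intro x y htop h0
    set D := (T.d x y).toReal with hD
    have hDpos : 0 < D := ENNReal.toReal_pos h0 htop
    by_contra hcon
    push_neg at hcon
    have hub : u x + c0 c c' * D < 1 := lt_of_lt_of_le hcon (hu1 y)
    set ε := min ((u y - (u x + c0 c c' * D))/2) ((1 - (u x + c0 c c' * D))/2) with hεdef
    have hεl : ε ≤ (u y - (u x + c0 c c' * D))/2 := by rw [hεdef]; exact min_le_left _ _
    have hεr : ε ≤ (1 - (u x + c0 c c' * D))/2 := by rw [hεdef]; exact min_le_right _ _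
    have hεpos : 0 < ε := lt_min (by linarith) (by linarith)
    obtain ⟨r, hr, hrlt⟩ := exists_lt_of_csInf_lt (hSne x) (show u x < u x + ε by linarith)
    rcases Set.mem_insert_iff.1 hr with rfl | ⟨m, hm, hxm, rfl⟩
    · have := mul_pos hc0' hDpos
      linarith [hu1 x]
    · obtain ⟨γ, hγ1, hγ2⟩ :=
        exists_rat_btwn (show c0 c c' * D < c0 c c' * D + ε by linarith)
      obtain ⟨n', hn'⟩ := qe_surj (qe m + γ)
      have hlvl' : lvl n' = lvl m + (γ:ℝ) := by unfold lvl; rw [hn']; push_cast; ring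
      have hγpos : (0:ℝ) < γ := lt_trans (mul_pos hc0' hDpos) hγ1
      have hvn' : validL n' := by
        constructor
        · rw [hlvl']; linarith [hm.1]
        · rw [hlvl']; linarith
      have hlt : lvl m < lvl n' := by rw [hlvl']; linarith
      have hxc : x ∈ C m := hOC m hm hxm
      have hdy : T.ptD y (C m) ≤ T.d x y := by
        have h' := ptD_le_d T (x := y) hxc
        rwa [T.d_symm y x] at h'
      have hmu : T.d x y < mu c c' (lvl n' - lvl m) := by
        have harg : lvl n' - lvl m = (γ:ℝ) := by rw [hlvl']; ring
        have hd : T.d x y = ENNReal.ofReal D := (ENNReal.ofReal_toReal htop).symm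
        rw [harg, hd]
        refine lt_of_lt_of_le ?_ (ofReal_le_mu hc hcc')
        rw [ENNReal.ofReal_lt_ofReal_iff (div_pos hγpos hc0')]
        exact (lt_div_iff₀ hc0').2 (by linarith)
      have hyO : y ∈ O n' := by
        by_contra hyO'
        have h1 := hInv1 m n' hm hvn' hlt y hyO'
        exact absurd (h1.trans hdy) (not_le.2 hmu)
      have huy := hule n' y hvn' hyO
      rw [hlvl'] at huy
      linarith
  -- Lipschitz estimate
  have hlip : ∀ x y, edist (u x) (u y) ≤ (c' : ℝ≥0∞) * T.d x y := by
    intro x y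
    by_cases h0 : T.d x y = 0
    · rw [T.eq_of_d_eq_zero x y h0]
      simp
    by_cases htop : T.d x y = ⊤
    · rw [htop, ENNReal.mul_top (by exact_mod_cast (hc.trans hcc').ne')]
      exact le_top
    · have hsymm : T.d y x = T.d x y := T.d_symm y x
      have k1 := key x y htop h0
      have k2 := key y x (by rwa [hsymm]) (by rwa [hsymm])
      rw [hsymm] at k2
      have hDnn : 0 ≤ (T.d x y).toReal := ENNReal.toReal_nonneg
      have habs : |u x - u y| ≤ (c':ℝ) * (T.d x y).toReal := by
        have hcle : c0 c c' * (T.d x y).toReal ≤ (c':ℝ) * (T.d x y).toReal :=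
          mul_le_mul_of_nonneg_right (c0_lt_c' hcc').le hDnn
        rw [abs_sub_le_iff]
        constructor <;> linarith
      rw [edist_dist, Real.dist_eq]
      calc ENNReal.ofReal |u x - u y|
          ≤ ENNReal.ofReal ((c':ℝ) * (T.d x y).toReal) := ENNReal.ofReal_le_ofReal habs
        _ = (c' : ℝ≥0∞) * T.d x y := by
            rw [ENNReal.ofReal_mul (c' : ℝ≥0).coe_nonneg, ENNReal.ofReal_coe_nnreal,
              ENNReal.ofReal_toReal htop]
  -- closeness to f on Y
  have hNR : (0:ℝ) < N := by exact_mod_cast hN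
  have hclose : ∀ y : Y, |u y - f y| ≤ 2 / N := by
    intro y
    have hy0 := (hf01 y).1
    have hy1 := (hf01 y).2
    rw [abs_le]
    constructor
    · -- f y - 2/N ≤ u y
      by_contra hcon
      push_neg at hcon
      have e1 : (N:ℝ) * (1/N) = 1 := by field_simp
      have e2 : 2/(N:ℝ) = 2*(1/N) := by ring
      have h2N : 0 < 1 / (N:ℝ) := by positivity
      have hul : u (y:X) < f y - 2/N := by linarith
      obtain ⟨r, hr, hrlt⟩ := exists_lt_of_csInf_lt (hSne _) hul
      rcases Set.mem_insert_iff.1 hr with rfl | ⟨m, hm, hym, rfl⟩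
      · linarith
      · set k := ⌊(N:ℝ) * lvl m⌋₊ + 1 with hk
        have hkc : (k:ℝ) = ((⌊(N:ℝ) * lvl m⌋₊ : ℝ)) + 1 := by rw [hk]; push_cast; ring
        have hfl1 : ((⌊(N:ℝ) * lvl m⌋₊ : ℝ)) ≤ (N:ℝ) * lvl m :=
          Nat.floor_le (mul_nonneg hNR.le hm.1.le)
        have hfl2 : (N:ℝ) * lvl m < ((⌊(N:ℝ) * lvl m⌋₊ : ℝ)) + 1 := Nat.lt_floor_add_one _
        have hgl : glv N k = (k:ℝ)/(N:ℝ) := rfl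
        have h1 : lvl m < glv N k := by
          rw [hgl, lt_div_iff₀ hNR]
          nlinarith [hfl2, hkc]
        have expand : (lvl m + 1/(N:ℝ))*N = N * lvl m + 1 := by
          field_simp
        have h2 : glv N k ≤ lvl m + 1/N := by
          rw [hgl, div_le_iff₀ hNR, hkc]
          linarith
        have expand2 : (1 - 1/(N:ℝ))*N = N - 1 := by field_simp
        have hkN : (k:ℝ) < (N:ℝ) - 1 := by
          have h3 : (k:ℝ)/(N:ℝ) < 1 - 1/N := by rw [← hgl]; linarith
          rw [div_lt_iff₀ hNR] at h3
          linarith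
        have hkgrid : k ∈ grid N := by
          have h4 : k + 1 < N := by
            have h' : ((k+1:ℕ):ℝ) < (N:ℝ) := by push_cast; linarith
            exact_mod_cast h'
          exact Set.mem_Icc.2 ⟨by omega, by omega⟩
        have hyG : (y:X) ∈ Ggh Y f N k := ⟨y, show glv N k ≤ f y by linarith, rfl⟩
        have hinv3 := hInv3 m hm k hkgrid h1 (y:X) (hOC m hm hym)
        rw [ptD_zero_of_mem T hyG] at hinv3
        exact (be_pos hc hcc' (by linarith)).not_ge hinv3
    · -- u y ≤ f y + 2/N
      by_contra hcon
      push_neg at hcon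
      have e1 : (N:ℝ) * (1/N) = 1 := by field_simp
      have e2 : 2/(N:ℝ) = 2*(1/N) := by ring
      have h2N : 0 < 1 / (N:ℝ) := by positivity
      have huy : f y + 2/N < u (y:X) := by linarith
      have hfy : f y < 1 - 2/N := by linarith [hu1 (y:X)]
      set k := ⌊(N:ℝ) * f y⌋₊ + 1 with hk
      have hkc : (k:ℝ) = ((⌊(N:ℝ) * f y⌋₊ : ℝ)) + 1 := by rw [hk]; push_cast; ring
      have hfl1 : ((⌊(N:ℝ) * f y⌋₊ : ℝ)) ≤ (N:ℝ) * f y := Nat.floor_le (mul_nonneg hNR.le hy0)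
      have hfl2 : (N:ℝ) * f y < ((⌊(N:ℝ) * f y⌋₊ : ℝ)) + 1 := Nat.lt_floor_add_one _
      have hgl : glv N k = (k:ℝ)/(N:ℝ) := rfl
      have h1 : f y < glv N k := by
        rw [hgl, lt_div_iff₀ hNR]
        nlinarith [hfl2, hkc]
      have expand : (f y + 1/(N:ℝ))*N = N * f y + 1 := by field_simp
      have h2 : glv N k ≤ f y + 1/N := by
        rw [hgl, div_le_iff₀ hNR, hkc]
        linarith
      have expand2 : (1 - 1/(N:ℝ))*N = N - 1 := by field_simp
      have hkN : (k:ℝ) < (N:ℝ) - 1 := by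
        have h3 : (k:ℝ)/(N:ℝ) < 1 - 1/N := by rw [← hgl]; linarith
        rw [div_lt_iff₀ hNR] at h3
        linarith
      have hkgrid : k ∈ grid N := by
        have h4 : k + 1 < N := by
          have h' : ((k+1:ℕ):ℝ) < (N:ℝ) := by push_cast; linarith
          exact_mod_cast h'
        exact Set.mem_Icc.2 ⟨by omega, by omega⟩
      have hyF : (y:X) ∈ Fgh Y f N k := ⟨y, h1.le, rfl⟩
      have hglpos : 0 < glv N k := by
        rw [hgl, hkc]
        positivity
      have hgl_lt : glv N k < min (u (y:X)) 1 := by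
        apply lt_min
        · linarith
        · linarith
      obtain ⟨q', hq'1, hq'2⟩ := exists_rat_btwn hgl_lt
      obtain ⟨n', hn'⟩ := qe_surj q'
      have hlvl' : lvl n' = (q':ℝ) := by rw [lvl, hn']
      have hvn' : validL n' := by
        constructor
        · rw [hlvl']; linarith
        · rw [hlvl']; exact lt_of_lt_of_le hq'2 (min_le_right _ _)
      have hyO : (y:X) ∈ O n' := by
        by_contra hyO'
        have hbe := hInv4 n' hvn' k hkgrid (by rw [hlvl']; exact hq'1) (y:X) hyO'
        rw [ptD_zero_of_mem T hyF] at hbe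
        exact (be_pos hc hcc' (by rw [hlvl']; linarith)).not_ge hbe
      have hq := hule n' (y:X) hvn' hyO
      rw [hlvl'] at hq
      have := lt_of_le_of_lt hq hq'2
      exact absurd this (not_lt.2 (min_le_left _ _))
  exact ⟨u, hcont, hlip, fun x => ⟨hu0 x, hu1 x⟩, hclose⟩

lemma approx' {T : TopometricOn X} (hT : T.IsNormal) {Y : Set X} (hY : IsClosed Y)
    {c c' : ℝ≥0} (hc : 0 < c) (hcc' : c < c') {f : Y → ℝ} (hfc : Continuous f)
    (hfl : ∀ a b : Y, edist (f a) (f b) ≤ (c : ℝ≥0∞) * T.d a b)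
    (hf01 : ∀ y, f y ∈ Set.Icc (0 : ℝ) 1) {δ : ℝ} (hδ : 0 < δ) :
    ∃ u : X → ℝ, Continuous u ∧ (∀ x y, edist (u x) (u y) ≤ (c' : ℝ≥0∞) * T.d x y) ∧
      (∀ x, u x ∈ Set.Icc (0:ℝ) 1) ∧ ∀ y : Y, |u y - f y| ≤ δ := by
  set N : ℕ := max 1 ⌈2 / δ⌉₊ with hNdef
  have hN1 : 1 ≤ N := le_max_left _ _
  have hN0 : 0 < N := hN1
  obtain ⟨u, h1, h2, h3, h4⟩ := approx hT hY hc hcc' hfc hfl hf01 N hN0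
  refine ⟨u, h1, h2, h3, fun y => (h4 y).trans ?_⟩
  have hNR : (0:ℝ) < N := by exact_mod_cast hN0
  have hNceil : (2/δ) ≤ (N:ℝ) := by
    refine le_trans (Nat.le_ceil _) ?_
    exact_mod_cast le_max_right 1 ⌈2/δ⌉₊
  have h2' : 2 ≤ (N:ℝ)*δ := by
    rw [div_le_iff₀ hδ] at hNceil
    linarith
  rw [div_le_iff₀ hNR]
  linarith [mul_comm ((N:ℝ)) δ]

/-- The iterative scheme for turning approximate extensions into an exact one. -/
noncomputable def iter (uu : ℕ → X → ℝ) : ℕ → X → ℝ :=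
  fun n => Nat.rec (fun _ => (1/2 : ℝ))
    (fun n gn x => max (min (uu n x) (gn x + ((1/2:ℝ)^n + (1/2:ℝ)^(n+1))))
      (gn x - ((1/2:ℝ)^n + (1/2:ℝ)^(n+1)))) n

lemma iter_zero (uu : ℕ → X → ℝ) (x : X) : iter uu 0 x = 1/2 := rfl

lemma iter_succ (uu : ℕ → X → ℝ) (n : ℕ) (x : X) :
    iter uu (n+1) x = max (min (uu n x) (iter uu n x + ((1/2:ℝ)^n + (1/2:ℝ)^(n+1))))
      (iter uu n x - ((1/2:ℝ)^n + (1/2:ℝ)^(n+1))) := rfl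

end TTZAux

/-- Tietze's Extension Theorem for topometric spaces. -/
theorem topometric_tietze {X : Type*} [TopologicalSpace X]
    (T : TopometricOn X) (hT : T.IsNormal) (Y : Set X) (hY : IsClosed Y)
    (c c' : ℝ≥0) (hc : 0 < c) (hcc' : c < c') (f : Y → ℝ)
    (hfc : Continuous f)
    (hfl : ∀ a b : Y, edist (f a) (f b) ≤ (c : ℝ≥0∞) * T.d a b)
    (hf01 : ∀ y, f y ∈ Set.Icc (0 : ℝ) 1) :
    ∃ g : X → ℝ, Continuous g ∧ (∀ x y, edist (g x) (g y) ≤ (c' : ℝ≥0∞) * T.d x y) ∧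
      (∀ x, g x ∈ Set.Icc (0 : ℝ) 1) ∧ ∀ y : Y, g y = f y := by
  classical
  open TTZAux in
  have hap : ∀ n : ℕ, ∃ u : X → ℝ, Continuous u ∧
      (∀ x y, edist (u x) (u y) ≤ (c' : ℝ≥0∞) * T.d x y) ∧
      (∀ x, u x ∈ Set.Icc (0:ℝ) 1) ∧ ∀ y : Y, |u y - f y| ≤ (1/2:ℝ)^(n+1) :=
    fun n => TTZAux.approx' hT hY hc hcc' hfc hfl hf01 (by positivity)
  choose uu hu1 hu2 hu3 hu4 using hap
  set g : ℕ → X → ℝ := TTZAux.iter uu with hgdef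
  have hg0 : ∀ x, g 0 x = 1/2 := fun x => rfl
  have hgs : ∀ n x, g (n+1) x = max (min (uu n x) (g n x + ((1/2:ℝ)^n + (1/2:ℝ)^(n+1))))
      (g n x - ((1/2:ℝ)^n + (1/2:ℝ)^(n+1))) := fun n x => rfl
  have hrpos : ∀ n : ℕ, (0:ℝ) < (1/2:ℝ)^n + (1/2:ℝ)^(n+1) := fun n => by positivity
  have hgcont : ∀ n, Continuous (g n) := by
    intro n
    induction n with
    | zero => exact continuous_const
    | succ n ih =>
      have : Continuous fun x => max (min (uu n x) (g n x + ((1/2:ℝ)^n + (1/2:ℝ)^(n+1))))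
          (g n x - ((1/2:ℝ)^n + (1/2:ℝ)^(n+1))) :=
        ((hu1 n).min (ih.add continuous_const)).max (ih.sub continuous_const)
      have he : g (n+1) = fun x => max (min (uu n x) (g n x + ((1/2:ℝ)^n + (1/2:ℝ)^(n+1))))
          (g n x - ((1/2:ℝ)^n + (1/2:ℝ)^(n+1))) := funext (hgs n)
      rw [he]
      exact this
  have hgrange : ∀ n x, g n x ∈ Set.Icc (0:ℝ) 1 := by
    intro n
    induction n with
    | zero => intro x; rw [hg0]; constructor <;> norm_num
    | succ n ih =>
      intro x
      rw [hgs]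
      constructor
      · refine le_trans ?_ (le_max_left _ _)
        exact le_min (hu3 n x).1 (by linarith [(ih x).1, (hrpos n).le])
      · refine max_le ?_ ?_
        · exact (min_le_left _ _).trans (hu3 n x).2
        · linarith [(ih x).2, (hrpos n).le]
  have hgclose : ∀ n, ∀ y : Y, |g n y - f y| ≤ (1/2:ℝ)^n := by
    intro n
    induction n with
    | zero =>
      intro y
      rw [hg0]
      rw [abs_le]
      have := (hf01 y).1
      have := (hf01 y).2
      norm_num
      constructor <;> linarith
    | succ n ih =>
      intro y
      have hy := ih y
      have hu := hu4 n y
      rw [abs_le] at hy hu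
      have hcl : g (n+1) (y:X) = uu n (y:X) := by
        rw [hgs]
        rw [min_eq_left (by linarith), max_eq_left (by linarith)]
      rw [hcl]
      exact hu4 n y
  have hgdiff : ∀ n x, |g (n+1) x - g n x| ≤ (1/2:ℝ)^n + (1/2:ℝ)^(n+1) := by
    intro n x
    rw [hgs, abs_le]
    constructor
    · have : g n x - ((1/2:ℝ)^n + (1/2:ℝ)^(n+1)) ≤ max (min (uu n x) (g n x + ((1/2:ℝ)^n + (1/2:ℝ)^(n+1)))) (g n x - ((1/2:ℝ)^n + (1/2:ℝ)^(n+1))) := le_max_right _ _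
      linarith
    · have : max (min (uu n x) (g n x + ((1/2:ℝ)^n + (1/2:ℝ)^(n+1)))) (g n x - ((1/2:ℝ)^n + (1/2:ℝ)^(n+1))) ≤ g n x + ((1/2:ℝ)^n + (1/2:ℝ)^(n+1)) :=
        max_le (min_le_right _ _) (by linarith [(hrpos n).le])
      linarith
  have hglip : ∀ n x y, edist (g n x) (g n y) ≤ (c' : ℝ≥0∞) * T.d x y := by
    intro n
    induction n with
    | zero => intro x y; simp [hg0]
    | succ n ih =>
      intro x y
      have habs : |g (n+1) x - g (n+1) y| ≤ max (max |uu n x - uu n y| |g n x - g n y|) |g n x - g n y| := by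
        rw [hgs, hgs]
        refine le_trans (abs_max_sub_max_le_max _ _ _ _) ?_
        refine max_le_max ?_ ?_
        · refine le_trans (abs_min_sub_min_le_max _ _ _ _) ?_
          refine max_le_max le_rfl ?_
          have : g n x + ((1/2:ℝ)^n + (1/2:ℝ)^(n+1)) - (g n y + ((1/2:ℝ)^n + (1/2:ℝ)^(n+1))) = g n x - g n y := by ring
          rw [this]
        · have : g n x - ((1/2:ℝ)^n + (1/2:ℝ)^(n+1)) - (g n y - ((1/2:ℝ)^n + (1/2:ℝ)^(n+1))) = g n x - g n y := by ring
          rw [this]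
      have hofmax : edist (g (n+1) x) (g (n+1) y) ≤
          max (max (edist (uu n x) (uu n y)) (edist (g n x) (g n y))) (edist (g n x) (g n y)) := by
        rw [edist_dist, edist_dist, edist_dist, Real.dist_eq, Real.dist_eq, Real.dist_eq]
        rw [← Monotone.map_max (fun _ _ h => ENNReal.ofReal_le_ofReal h),
          ← Monotone.map_max (fun _ _ h => ENNReal.ofReal_le_ofReal h)]
        exact ENNReal.ofReal_le_ofReal habs
      exact hofmax.trans (max_le (max_le (hu2 n x y) (ih x y)) (ih x y))
  -- uniform Cauchy bound
  have haux : ∀ n m x, n ≤ m → |g m x - g n x| ≤ 4*(1/2:ℝ)^n := by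
    intro n m x hnm
    obtain ⟨p, rfl⟩ := Nat.exists_eq_add_of_le hnm
    clear hnm
    have main : ∀ p, |g (n+p) x - g n x| ≤ 4*(1/2:ℝ)^n - 4*(1/2:ℝ)^(n+p) := by
      intro p
      induction p with
      | zero => simp
      | succ p ih =>
        have h1 := hgdiff (n+p) x
        have hps : (1/2:ℝ)^(n+(p+1)) = (1/2:ℝ)^(n+p) * (1/2) := by rw [← pow_succ]; ring_nf
        have hps2 : (1/2:ℝ)^(n+p+1) = (1/2:ℝ)^(n+p) * (1/2) := by rw [← pow_succ]
        have habs := abs_sub_le (g (n+(p+1)) x) (g (n+p) x) (g n x)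
        have he : n + (p+1) = (n+p)+1 := by omega
        rw [he] at habs ⊢
        rw [hps2]
        rw [abs_le] at h1 ih ⊢
        rw [hps2] at h1
        constructor <;> nlinarith [pow_nonneg (by norm_num : (0:ℝ) ≤ 1/2) (n+p)]
    refine (main p).trans ?_
    have := pow_nonneg (by norm_num : (0:ℝ) ≤ 1/2) (n+p)
    linarith
  have hcs : ∀ x, CauchySeq (fun n => g n x) := by
    intro x
    refine cauchySeq_of_le_geometric (1/2) (3/2) (by norm_num) (fun n => ?_)
    rw [Real.dist_eq, abs_sub_comm]
    refine (hgdiff n x).trans ?_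
    rw [pow_succ]
    ring_nf
    exact le_refl _
  choose L hL using fun x => cauchySeq_tendsto_of_complete (hcs x)
  have hbound : ∀ n x, |g n x - L x| ≤ 4*(1/2:ℝ)^n := by
    intro n x
    have htd : Filter.Tendsto (fun m => |g m x - g n x|) Filter.atTop (nhds |L x - g n x|) :=
      (Filter.Tendsto.abs ((hL x).sub_const (g n x)))
    have hle : |L x - g n x| ≤ 4*(1/2:ℝ)^n :=
      le_of_tendsto htd (Filter.eventually_atTop.2 ⟨n, fun m hm => haux n m x hm⟩)
    rwa [abs_sub_comm]
  have hpow0 : Filter.Tendsto (fun n : ℕ => 4*(1/2:ℝ)^n) Filter.atTop (nhds 0) := by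
    have h := tendsto_pow_atTop_nhds_zero_of_lt_one (by norm_num : (0:ℝ) ≤ 1/2) (by norm_num)
    simpa using h.const_mul (4:ℝ)
  have htu : TendstoUniformly (fun n x => g n x) L Filter.atTop := by
    rw [Metric.tendstoUniformly_iff]
    intro ε hε
    obtain ⟨n0, hn0⟩ := (hpow0.eventually (gt_mem_nhds hε)).exists
    refine Filter.eventually_atTop.2 ⟨n0, fun n hn x => ?_⟩
    rw [Real.dist_eq, abs_sub_comm]
    refine lt_of_le_of_lt ((hbound n x).trans ?_) hn0
    have : (1/2:ℝ)^n ≤ (1/2:ℝ)^n0 := pow_le_pow_of_le_one (by norm_num) (by norm_num) hn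
    linarith
  have hLcont : Continuous L := htu.continuous (Filter.Eventually.of_forall hgcont).frequently
  have hLrange : ∀ x, L x ∈ Set.Icc (0:ℝ) 1 := by
    intro x
    constructor
    · exact ge_of_tendsto (hL x) (Filter.Eventually.of_forall fun n => (hgrange n x).1)
    · exact le_of_tendsto (hL x) (Filter.Eventually.of_forall fun n => (hgrange n x).2)
  have hLf : ∀ y : Y, L y = f y := by
    intro y
    have habs0 : Filter.Tendsto (fun n => |g n (y:X) - f y|) Filter.atTop (nhds 0) := by
      refine squeeze_zero (fun n => abs_nonneg _) (fun n => hgclose n y) ?_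
      exact tendsto_pow_atTop_nhds_zero_of_lt_one (by norm_num) (by norm_num)
    have htd : Filter.Tendsto (fun n => g n (y:X)) Filter.atTop (nhds (f y)) := by
      rw [tendsto_iff_dist_tendsto_zero]
      simpa [Real.dist_eq] using habs0
    exact tendsto_nhds_unique (hL (y:X)) htd
  have hLlip : ∀ x y, edist (L x) (L y) ≤ (c' : ℝ≥0∞) * T.d x y := by
    intro x y
    refine ENNReal.le_of_forall_pos_le_add fun ε hε _ => ?_
    have hεe : (0:ℝ≥0∞) < (ε:ℝ≥0∞) := by exact_mod_cast hε
    obtain ⟨n0, hn0⟩ : ∃ n0, ENNReal.ofReal (8*(1/2:ℝ)^n0) < (ε:ℝ≥0∞) := by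
      have h8 : Filter.Tendsto (fun n : ℕ => 8*(1/2:ℝ)^n) Filter.atTop (nhds 0) := by
        have h := tendsto_pow_atTop_nhds_zero_of_lt_one (by norm_num : (0:ℝ) ≤ 1/2) (by norm_num)
        simpa using h.const_mul (8:ℝ)
      have : Filter.Tendsto (fun n : ℕ => ENNReal.ofReal (8*(1/2:ℝ)^n)) Filter.atTop (nhds 0) := by
        simpa using (ENNReal.tendsto_ofReal h8)
      exact (this.eventually (gt_mem_nhds hεe)).exists
    have hb1 : edist (L x) (g n0 x) ≤ ENNReal.ofReal (4*(1/2:ℝ)^n0) := by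
      rw [edist_dist, Real.dist_eq, abs_sub_comm]
      exact ENNReal.ofReal_le_ofReal (hbound n0 x)
    have hb2 : edist (g n0 y) (L y) ≤ ENNReal.ofReal (4*(1/2:ℝ)^n0) := by
      rw [edist_dist, Real.dist_eq]
      exact ENNReal.ofReal_le_ofReal (hbound n0 y)
    calc edist (L x) (L y)
        ≤ edist (L x) (g n0 x) + edist (g n0 x) (g n0 y) + edist (g n0 y) (L y) :=
          edist_triangle4 _ _ _ _
      _ ≤ ENNReal.ofReal (4*(1/2:ℝ)^n0) + (c' : ℝ≥0∞) * T.d x y + ENNReal.ofReal (4*(1/2:ℝ)^n0) :=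
          add_le_add (add_le_add hb1 (hglip n0 x y)) hb2
      _ = (c' : ℝ≥0∞) * T.d x y +
          (ENNReal.ofReal (4*(1/2:ℝ)^n0) + ENNReal.ofReal (4*(1/2:ℝ)^n0)) := by ring
      _ = (c' : ℝ≥0∞) * T.d x y + ENNReal.ofReal (8*(1/2:ℝ)^n0) := by
          rw [← ENNReal.ofReal_add (by positivity) (by positivity)]
          congr 1
          ring
      _ ≤ (c' : ℝ≥0∞) * T.d x y + (ε:ℝ≥0∞) := add_le_add le_rfl hn0.le
  exact ⟨L, hLcont, hLlip, hLrange, hLf⟩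
end

section
/- Every compact topometric space is a normal topometric space. -/
open scoped ENNReal NNReal
open Set

open Topology

/-- The topology of a topometric space is Hausdorff: the diagonal is the zero set
of the lower semicontinuous distance function, hence closed. -/
theorem TopometricOn.t2 {X : Type*} [TopologicalSpace X] (T : TopometricOn X) : T2Space X := by
  rw [t2_iff_isClosed_diagonal]
  have h : diagonal X = {p : X × X | T.d p.1 p.2 ≤ 0} := by
    ext ⟨a, b⟩
    simp only [mem_diagonal_iff, mem_setOf_eq, le_zero_iff]
    exact ⟨fun h => h ▸ T.d_self a, fun h => T.eq_of_d_eq_zero a b h⟩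
  rw [h]
  exact T.lsc.isClosed_preimage 0

/-- Distance to a compact set is lower semicontinuous. -/
theorem TopometricOn.lsc_ptD {X : Type*} [TopologicalSpace X] (T : TopometricOn X)
    {F : Set X} (hF : IsCompact F) : LowerSemicontinuous fun x => T.ptD x F := by
  intro x c hc
  obtain ⟨c', hcc', hc'⟩ := exists_between hc
  -- for each y ∈ F, find neighborhoods
  have key : ∀ y ∈ F, ∃ U ∈ 𝓝 x, ∃ V ∈ 𝓝 y, ∀ p ∈ U, ∀ q ∈ V, c' < T.d p q := by
    intro y hy
    have hdy : c' < T.d x y := lt_of_lt_of_le hc' (iInf₂_le y hy)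
    have := T.lsc (x, y) c' hdy
    rw [Filter.eventually_iff, nhds_prod_eq, Filter.mem_prod_iff] at this
    obtain ⟨U, hU, V, hV, hUV⟩ := this
    exact ⟨U, hU, V, hV, fun p hp q hq => hUV (mk_mem_prod hp hq)⟩
  choose U hU V hV hlt using key
  obtain ⟨t, hcov⟩ := hF.elim_nhds_subcover' V hV
  have hUmem : (⋂ y ∈ t, U y y.2) ∈ 𝓝 x :=
    (Filter.biInter_finset_mem t).2 fun y _ => hU y y.2
  filter_upwards [hUmem] with x' hx'
  refine lt_of_lt_of_le hcc' (le_iInf₂ fun y hy => ?_)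
  obtain ⟨z, hz⟩ := mem_iUnion.1 (hcov hy)
  obtain ⟨hzt, hyVz⟩ := mem_iUnion.1 hz
  have hx'U : x' ∈ U z z.2 := by
    have := mem_iInter.1 hx' z
    exact mem_iInter.1 this hzt
  exact (hlt z z.2 x' hx'U y hyVz).le

/-- every compact topometric space is normal. -/
theorem compact_topometric_isNormal {X : Type*} [TopologicalSpace X] [CompactSpace X]
    (T : TopometricOn X) : T.IsNormal := by
  haveI : T2Space X := T.t2
  constructor
  · intro F G hF hG hd
    have hdisj : Disjoint F G := by
      rw [Set.disjoint_left]
      intro x hxF hxG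
      have : T.setD F G ≤ 0 := by
        calc T.setD F G ≤ ⨅ y ∈ G, T.d x y := iInf₂_le x hxF
          _ ≤ T.d x x := iInf₂_le x hxG
          _ = 0 := T.d_self x
      exact hd.ne' (le_antisymm this zero_le)
    obtain ⟨U, V, hU, hV, hFU, hGV, hUV⟩ := normal_separation hF hG hdisj
    exact ⟨U, V, hU, hV, hFU, hGV, hUV⟩
  · intro F hFc r _
    have hlsc := T.lsc_ptD hFc.isCompact
    exact hlsc.isClosed_preimage r
end

section
/- Let X be a completely regular topometric space and ℱ = C_{L(1)}(X, ℝ⁺), the set of continuous 1-Lipschitz functions X → [0,∞). Then the map θ : X → ([0,∞))^ℱ, θ(x)(f) = f(x), where the codomain carries the product topology and supremum metric, is a topometric embedding: a homeomorphism onto its image that is also an isometry. -/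
open scoped ENNReal NNReal
open Set

/-- Complete regularity witnessed by continuous `1`-Lipschitz functions into `ℝ⁺`. -/
def TopometricOn.IsCompletelyRegularNN {X : Type*} [TopologicalSpace X]
    (T : TopometricOn X) : Prop :=
  (∀ F : Set X, IsClosed F → ∀ x ∉ F,
      ∃ f : X → ℝ, Continuous f ∧ (∀ a b, edist (f a) (f b) ≤ T.d a b) ∧ (∀ a, 0 ≤ f a) ∧
        ∃ t : ℝ, (∀ y ∈ F, f y = t) ∧ f x ≠ t) ∧
  (∀ x y : X, T.d x y =
      ⨆ f : {f : X → ℝ // Continuous f ∧ (∀ a b, edist (f a) (f b) ≤ T.d a b) ∧ ∀ a, 0 ≤ f a},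
        edist (f.1 x) (f.1 y))

/-- the evaluation map of a completely regular topometric space into
`(ℝ⁺)^ℱ`, `ℱ` the continuous `1`-Lipschitz functions into `ℝ⁺`, is a topometric
embedding: a topological embedding which is an isometry for the supremum metric. -/
theorem completelyRegular_evaluation_topometric_embedding {X : Type*} [TopologicalSpace X]
    (T : TopometricOn X) (hT : T.IsCompletelyRegularNN) :
    Topology.IsEmbedding (fun x : X =>
      fun f : {f : X → ℝ // Continuous f ∧ (∀ a b, edist (f a) (f b) ≤ T.d a b) ∧ ∀ a, 0 ≤ f a} =>
        f.1 x) ∧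
    ∀ x y : X, T.d x y =
      ⨆ f : {f : X → ℝ // Continuous f ∧ (∀ a b, edist (f a) (f b) ≤ T.d a b) ∧ ∀ a, 0 ≤ f a},
        edist (f.1 x) (f.1 y) := by
  set θ := (fun x : X =>
      fun f : {f : X → ℝ // Continuous f ∧ (∀ a b, edist (f a) (f b) ≤ T.d a b) ∧ ∀ a, 0 ≤ f a} =>
        f.1 x) with hθ
  refine ⟨?_, hT.2⟩
  have inj : Function.Injective θ := by
    intro x y hxy
    apply T.eq_of_d_eq_zero
    rw [hT.2 x y]
    simp only [ENNReal.iSup_eq_zero]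
    intro f
    have : f.1 x = f.1 y := congrFun hxy f
    simp [this]
  have cont : Continuous θ := continuous_pi fun f => f.2.1
  rw [Topology.isEmbedding_iff]
  refine ⟨?_, inj⟩
  rw [Topology.isInducing_iff_nhds]
  intro x
  refine le_antisymm cont.continuousAt.le_comap ?_
  intro U hU
  rw [mem_nhds_iff] at hU
  obtain ⟨V, hVU, hVopen, hxV⟩ := hU
  obtain ⟨f, hfc, hflip, hfnn, t, htF, hxt⟩ := hT.1 Vᶜ hVopen.isClosed_compl x (by simpa)
  refine Filter.mem_comap.2 ⟨{g | g ⟨f, hfc, hflip, hfnn⟩ ≠ t}, ?_, ?_⟩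
  · exact IsOpen.mem_nhds ((isOpen_ne).preimage (continuous_apply _)) hxt
  · intro y hy
    by_contra h
    exact hy (htF y (fun hyV => h (hVU hyV)))
end
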